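/- arXiv:1305.3940 — 10 statements merged into one kernel-verified Lean document; each statement's English description precedes it below -/
import Mathlib

section
/- Let b ∈ ℂ and consider the sextic polynomial f(x) = ((1-b)/3 + (2/3)(1-b)·x + x²) · ((b-4)·b/12 + ((b-4)/3)·x + x²) · (b - (2/3)(b+2)·x + x²) in ℂ[x]. Then f is squarefree (equivalently, f has no repeated complex roots) if and only if b·(b-4)·(b-2)·(b-1)·(b+2) ≠ 0. -/
open Polynomial

private lemma quad_sep (c p u0 v0 v1 : ℂ)
    (h0 : u0 * c + v0 * p = 1) (h1 : u0 * p + 2 * v0 + v1 * p = 0)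
    (h2 : u0 + 2 * v1 = 0) :
    Separable (C c + C p * X + X ^ 2 : ℂ[X]) := by
  have hd : derivative (C c + C p * X + X ^ 2 : ℂ[X]) = C p + 2 * X := by
    simp [derivative_X_pow, map_ofNat]; norm_num
  rw [separable_def, hd]
  refine ⟨C u0, C v0 + C v1 * X, ?_⟩
  have H0 := congrArg C h0
  have H1 := congrArg C h1
  have H2 := congrArg C h2
  simp only [map_add, map_mul, map_one, map_zero, map_ofNat] at H0 H1 H2
  linear_combination H0 + X * H1 + X ^ 2 * H2

private lemma quad_coprime (c p c' p' u0 u1 v0 v1 : ℂ)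
    (h0 : u0 * c + v0 * c' = 1) (h1 : u0 * p + u1 * c + v0 * p' + v1 * c' = 0)
    (h2 : u0 + u1 * p + v0 + v1 * p' = 0) (h3 : u1 + v1 = 0) :
    IsCoprime (C c + C p * X + X ^ 2 : ℂ[X]) (C c' + C p' * X + X ^ 2) := by
  refine ⟨C u0 + C u1 * X, C v0 + C v1 * X, ?_⟩
  have H0 := congrArg C h0
  have H1 := congrArg C h1
  have H2 := congrArg C h2
  have H3 := congrArg C h3
  simp only [map_add, map_mul, map_one, map_zero, map_ofNat] at H0 H1 H2 H3
  linear_combination H0 + X * H1 + X ^ 2 * H2 + X ^ 3 * H3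

set_option maxHeartbeats 1000000 in
/-- The sextic `f(x) = ((1-b)/3 + (2/3)(1-b)x + x²)((b-4)b/12 + ((b-4)/3)x + x²)(b - (2/3)(b+2)x + x²)`
is squarefree iff `b(b-4)(b-2)(b-1)(b+2) ≠ 0`. -/
theorem stmt_0 (b : ℂ) :
    Squarefree ((C ((1 - b) / 3) + C (2 / 3 * (1 - b)) * X + X ^ 2) *
        (C ((b - 4) * b / 12) + C ((b - 4) / 3) * X + X ^ 2) *
        (C b - C (2 / 3 * (b + 2)) * X + X ^ 2) : ℂ[X]) ↔
      b * (b - 4) * (b - 2) * (b - 1) * (b + 2) ≠ 0 := by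
  have e3 : (C b - C (2 / 3 * (b + 2)) * X + X ^ 2 : ℂ[X])
      = C b + C (-(2 / 3 * (b + 2))) * X + X ^ 2 := by
    rw [map_neg]; ring
  rw [e3]
  constructor
  · -- Squarefree → condition
    intro hsq
    intro hzero
    -- extract which factor vanishes
    have hsep : Separable ((C ((1 - b) / 3) + C (2 / 3 * (1 - b)) * X + X ^ 2) *
        (C ((b - 4) * b / 12) + C ((b - 4) / 3) * X + X ^ 2) *
        (C b + C (-(2 / 3 * (b + 2))) * X + X ^ 2) : ℂ[X]) :=
      PerfectField.separable_iff_squarefree.mpr hsq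
    obtain ⟨u, v, huv⟩ := hsep
    -- find a common root r of the polynomial and its derivative
    have key : ∀ r : ℂ,
        eval r ((C ((1 - b) / 3) + C (2 / 3 * (1 - b)) * X + X ^ 2) *
          (C ((b - 4) * b / 12) + C ((b - 4) / 3) * X + X ^ 2) *
          (C b + C (-(2 / 3 * (b + 2))) * X + X ^ 2) : ℂ[X]) = 0 →
        eval r (derivative ((C ((1 - b) / 3) + C (2 / 3 * (1 - b)) * X + X ^ 2) *
          (C ((b - 4) * b / 12) + C ((b - 4) / 3) * X + X ^ 2) *
          (C b + C (-(2 / 3 * (b + 2))) * X + X ^ 2) : ℂ[X])) = 0 → False := by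
      intro r h1 h2
      have := congrArg (eval r) huv
      simp only [eval_add, eval_mul, eval_one, h1, h2, mul_zero, add_zero, zero_add] at this
      exact one_ne_zero this.symm
    have hd : derivative ((C ((1 - b) / 3) + C (2 / 3 * (1 - b)) * X + X ^ 2) *
          (C ((b - 4) * b / 12) + C ((b - 4) / 3) * X + X ^ 2) *
          (C b + C (-(2 / 3 * (b + 2))) * X + X ^ 2) : ℂ[X])
        = (derivative (C ((1 - b) / 3) + C (2 / 3 * (1 - b)) * X + X ^ 2 : ℂ[X]) *
            (C ((b - 4) * b / 12) + C ((b - 4) / 3) * X + X ^ 2) +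
           (C ((1 - b) / 3) + C (2 / 3 * (1 - b)) * X + X ^ 2) *
            derivative (C ((b - 4) * b / 12) + C ((b - 4) / 3) * X + X ^ 2 : ℂ[X])) *
          (C b + C (-(2 / 3 * (b + 2))) * X + X ^ 2) +
          (C ((1 - b) / 3) + C (2 / 3 * (1 - b)) * X + X ^ 2) *
            (C ((b - 4) * b / 12) + C ((b - 4) / 3) * X + X ^ 2) *
          derivative (C b + C (-(2 / 3 * (b + 2))) * X + X ^ 2 : ℂ[X]) := by
      rw [derivative_mul, derivative_mul]
    rcases mul_eq_zero.1 hzero with h | h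
    · rcases mul_eq_zero.1 h with h | h
      · rcases mul_eq_zero.1 h with h | h
        · rcases mul_eq_zero.1 h with h | h
          · -- b = 0 : common root r = 0 of q2, q3
            have hb : b = 0 := h
            subst hb
            refine key 0 ?_ ?_
            · simp
            · rw [hd]; simp [derivative_X_pow]
          · -- b = 4 : q2 = X²
            have hb : b = 4 := by linear_combination h
            subst hb
            refine key 0 ?_ ?_
            · norm_num
            · rw [hd]; simp [derivative_X_pow]; try norm_num
        · -- b = 2 : q1 and q2 share root 1
          have hb : b = 2 := by linear_combination h
          subst hb
          refine key 1 ?_ ?_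
          · norm_num
          · rw [hd]; simp [derivative_X_pow]; try norm_num
      · -- b = 1 : q1 = X²
        have hb : b = 1 := by linear_combination h
        subst hb
        refine key 0 ?_ ?_
        · norm_num
        · rw [hd]; simp [derivative_X_pow]; try norm_num
    · -- b = -2 : q1 = (X+1)²
      have hb : b = -2 := by linear_combination h
      subst hb
      refine key (-1) ?_ ?_
      · norm_num
      · rw [hd]; simp [derivative_X_pow]; try norm_num
  · -- condition → Squarefree
    intro hb
    have h0 : b ≠ 0 := fun h => hb (by rw [h]; ring)
    have h4 : b - 4 ≠ 0 := by intro h; exact hb (by rw [show b = 4 by linear_combination h]; ring)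
    have h2 : b - 2 ≠ 0 := by intro h; exact hb (by rw [show b = 2 by linear_combination h]; ring)
    have h1 : b - 1 ≠ 0 := by intro h; exact hb (by rw [show b = 1 by linear_combination h]; ring)
    have hm2 : b + 2 ≠ 0 := by intro h; exact hb (by rw [show b = -2 by linear_combination h]; ring)
    have hD : (b - 1) * (b + 2) ≠ 0 := mul_ne_zero h1 hm2
    have hE : (b - 4) * (b + 2) ≠ 0 := mul_ne_zero h4 hm2
    have hG : (b - 1) * (b - 4) ≠ 0 := mul_ne_zero h1 h4
    have hW1 : (b - 1) * (b + 2) * ((b - 1) * (b + 2))⁻¹ = 1 := mul_inv_cancel₀ hD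
    have hW2 : (b - 4) * (b + 2) * ((b - 4) * (b + 2))⁻¹ = 1 := mul_inv_cancel₀ hE
    have hW3 : (b - 1) * (b - 4) * ((b - 1) * (b - 4))⁻¹ = 1 := mul_inv_cancel₀ hG
    have hW4 : (b - 2) ^ 3 * ((b - 2) ^ 3)⁻¹ = 1 := mul_inv_cancel₀ (pow_ne_zero 3 h2)
    have hW5 : b ^ 3 * (b ^ 3)⁻¹ = 1 := mul_inv_cancel₀ (pow_ne_zero 3 h0)
    have sep1 : Separable (C ((1 - b) / 3) + C (2 / 3 * (1 - b)) * X + X ^ 2 : ℂ[X]) :=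
      quad_sep _ _ (-9 * ((b - 1) * (b + 2))⁻¹) (3 / 2 * (1 - b) * ((b - 1) * (b + 2))⁻¹)
        (9 / 2 * ((b - 1) * (b + 2))⁻¹)
        (by linear_combination hW1) (by ring) (by ring)
    have sep2 : Separable (C ((b - 4) * b / 12) + C ((b - 4) / 3) * X + X ^ 2 : ℂ[X]) :=
      quad_sep _ _ (18 * ((b - 4) * (b + 2))⁻¹) (-3 / 2 * (b - 4) * ((b - 4) * (b + 2))⁻¹)
        (-9 * ((b - 4) * (b + 2))⁻¹)
        (by linear_combination hW2) (by ring) (by ring)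
    have sep3 : Separable (C b + C (-(2 / 3 * (b + 2))) * X + X ^ 2 : ℂ[X]) :=
      quad_sep _ _ (-9 * ((b - 1) * (b - 4))⁻¹) (-3 / 2 * (b + 2) * ((b - 1) * (b - 4))⁻¹)
        (9 / 2 * ((b - 1) * (b - 4))⁻¹)
        (by linear_combination hW3) (by ring) (by ring)
    have cop12 : IsCoprime (C ((1 - b) / 3) + C (2 / 3 * (1 - b)) * X + X ^ 2 : ℂ[X])
        (C ((b - 4) * b / 12) + C ((b - 4) / 3) * X + X ^ 2) :=
      quad_coprime _ _ _ _ (4 * (b - 6) * ((b - 2) ^ 3)⁻¹) (16 * ((b - 2) ^ 3)⁻¹)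
        (4 * (3 * b - 2) * ((b - 2) ^ 3)⁻¹) (-16 * ((b - 2) ^ 3)⁻¹)
        (by linear_combination hW4) (by ring) (by ring) (by ring)
    have cop13 : IsCoprime (C ((1 - b) / 3) + C (2 / 3 * (1 - b)) * X + X ^ 2 : ℂ[X])
        (C b + C (-(2 / 3 * (b + 2))) * X + X ^ 2) :=
      quad_coprime _ _ _ _ 3 (-2) 1 2
        (by ring) (by ring) (by ring) (by ring)
    have cop23 : IsCoprime (C ((b - 4) * b / 12) + C ((b - 4) / 3) * X + X ^ 2 : ℂ[X])
        (C b + C (-(2 / 3 * (b + 2))) * X + X ^ 2) :=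
      quad_coprime _ _ _ _ (12 * b * (b ^ 3)⁻¹) (-16 * (b ^ 3)⁻¹) (4 * b * (b ^ 3)⁻¹) (16 * (b ^ 3)⁻¹)
        (by linear_combination hW5) (by ring) (by ring) (by ring)
    exact (((sep1.mul sep2 cop12).mul sep3 (cop13.mul_left cop23))).squarefree
end

section
/- There exist permutations σ₁, σ₂, σ₃, σ₄, σ₅ in the symmetric group S₈ on 8 letters such that: σ₁, σ₂, σ₃ each have cycle type {2,2,2} (a product of three disjoint transpositions), σ₄ has cycle type {2,2,2,2} (a product of four disjoint transpositions), σ₅ has cycle type {2} (a single transposition), σ₁σ₂σ₃σ₄σ₅ = 1, and σ₁, σ₂, σ₃, σ₄, σ₅ generate the full symmetric group S₈. -/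
open Equiv Equiv.Perm

private lemma cycleType_swap' {a b : Fin 8} (h : a ≠ b) :
    (Equiv.swap a b).cycleType = {2} := by
  rw [(isCycle_swap h).cycleType, support_swap h, Finset.card_insert_of_notMem (by simpa),
    Finset.card_singleton]


private lemma disj' (f g : Equiv.Perm (Fin 8)) (h : ∀ x, f x = x ∨ g x = x) :
    f.Disjoint g := h

/-- There is a branch-cycle tuple in `S₈` of cycle types
`(2³, 2³, 2³, 2⁴, 2)` with product one generating the full `S₈`. -/
theorem stmt_3 : ∃ σ₁ σ₂ σ₃ σ₄ σ₅ : Equiv.Perm (Fin 8),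
    σ₁.cycleType = {2, 2, 2} ∧ σ₂.cycleType = {2, 2, 2} ∧ σ₃.cycleType = {2, 2, 2} ∧
    σ₄.cycleType = {2, 2, 2, 2} ∧ σ₅.cycleType = {2} ∧
    σ₁ * σ₂ * σ₃ * σ₄ * σ₅ = 1 ∧
    Subgroup.closure ({σ₁, σ₂, σ₃, σ₄, σ₅} : Set (Equiv.Perm (Fin 8))) = ⊤ := by
  let s₁ : Perm (Fin 8) := Equiv.swap 1 7 * (Equiv.swap 2 6 * Equiv.swap 3 5)
  let s₃ : Perm (Fin 8) := Equiv.swap 2 7 * (Equiv.swap 3 6 * Equiv.swap 4 5)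
  let s₄ : Perm (Fin 8) := Equiv.swap 0 1 * (Equiv.swap 2 7 * (Equiv.swap 3 6 * Equiv.swap 4 5))
  let s₅ : Perm (Fin 8) := Equiv.swap 0 1
  refine ⟨s₁, s₁, s₃, s₄, s₅, ?_, ?_, ?_, ?_, ?_, ?_, ?_⟩
  · rw [Disjoint.cycleType_mul (disj' _ _ (by decide)), Disjoint.cycleType_mul (disj' _ _ (by decide)),
      cycleType_swap' (by decide), cycleType_swap' (by decide), cycleType_swap' (by decide)]
    rfl
  · rw [Disjoint.cycleType_mul (disj' _ _ (by decide)), Disjoint.cycleType_mul (disj' _ _ (by decide)),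
      cycleType_swap' (by decide), cycleType_swap' (by decide), cycleType_swap' (by decide)]
    rfl
  · rw [Disjoint.cycleType_mul (disj' _ _ (by decide)), Disjoint.cycleType_mul (disj' _ _ (by decide)),
      cycleType_swap' (by decide), cycleType_swap' (by decide), cycleType_swap' (by decide)]
    rfl
  · rw [Disjoint.cycleType_mul (disj' _ _ (by decide)), Disjoint.cycleType_mul (disj' _ _ (by decide)),
      Disjoint.cycleType_mul (disj' _ _ (by decide)), cycleType_swap' (by decide), cycleType_swap' (by decide),
      cycleType_swap' (by decide), cycleType_swap' (by decide)]
    rfl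
  · exact cycleType_swap' (by decide)
  · decide
  · have key : Subgroup.closure ({finRotate 8, Equiv.swap 0 (finRotate 8 0)} :
        Set (Perm (Fin 8))) = ⊤ :=
      closure_cycle_adjacent_swap isCycle_finRotate support_finRotate 0
    rw [eq_top_iff, ← key, Subgroup.closure_le, Set.insert_subset_iff, Set.singleton_subset_iff]
    constructor
    · have : finRotate 8 = s₄ * s₁ := by decide
      rw [this]
      exact mul_mem (Subgroup.subset_closure (by simp)) (Subgroup.subset_closure (by simp))
    · have : Equiv.swap 0 (finRotate 8 0) = s₅ := by decide
      rw [this]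
      exact Subgroup.subset_closure (by simp)
end

section
/- There exist permutations σ₁, σ₂, σ₃, σ₄ in the symmetric group S₈ on 8 letters such that: σ₁ and σ₄ each have cycle type {2,2,2,2} (a product of four disjoint transpositions), σ₂ and σ₃ each have cycle type {2,2,2} (a product of three disjoint transpositions), σ₁σ₂σ₃σ₄ = 1, and the subgroup of S₈ generated by σ₁, σ₂, σ₃, σ₄ is a transitive subgroup of order 16. -/
set_option maxRecDepth 10000
def gv : Fin 16 → Equiv.Perm (Fin 8) :=
  ![⟨![0,1,2,3,4,5,6,7], ![0,1,2,3,4,5,6,7], by decide, by decide⟩,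
    ⟨![1,0,7,4,3,6,5,2], ![1,0,7,4,3,6,5,2], by decide, by decide⟩,
    ⟨![2,6,0,7,4,5,1,3], ![2,6,0,7,4,5,1,3], by decide, by decide⟩,
    ⟨![5,7,4,3,2,0,6,1], ![5,7,4,3,2,0,6,1], by decide, by decide⟩,
    ⟨![6,4,3,2,1,7,0,5], ![6,4,3,2,1,7,0,5], by decide, by decide⟩,
    ⟨![7,5,1,2,3,6,0,4], ![6,2,3,4,7,1,5,0], by decide, by decide⟩,
    ⟨![6,2,3,4,7,1,5,0], ![7,5,1,2,3,6,0,4], by decide, by decide⟩,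
    ⟨![5,3,4,7,0,2,1,6], ![4,6,5,1,2,0,7,3], by decide, by decide⟩,
    ⟨![1,4,7,0,6,3,2,5], ![3,0,6,5,1,7,4,2], by decide, by decide⟩,
    ⟨![4,6,5,1,2,0,7,3], ![5,3,4,7,0,2,1,6], by decide, by decide⟩,
    ⟨![3,0,6,5,1,7,4,2], ![1,4,7,0,6,3,2,5], by decide, by decide⟩,
    ⟨![0,3,2,1,5,4,7,6], ![0,3,2,1,5,4,7,6], by decide, by decide⟩,
    ⟨![3,5,6,0,7,1,2,4], ![3,5,6,0,7,1,2,4], by decide, by decide⟩,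
    ⟨![4,1,5,6,0,2,3,7], ![4,1,5,6,0,2,3,7], by decide, by decide⟩,
    ⟨![7,2,1,5,6,3,4,0], ![7,2,1,5,6,3,4,0], by decide, by decide⟩,
    ⟨![2,7,0,6,5,4,3,1], ![2,7,0,6,5,4,3,1], by decide, by decide⟩]
def mtab : Fin 16 → Fin 16 → Fin 16 :=
  ![![0,1,2,3,4,5,6,7,8,9,10,11,12,13,14,15], ![1,0,5,6,7,2,3,4,11,12,13,8,9,10,15,14], ![2,6,0,7,8,12,1,3,4,13,14,15,5,9,10,11], ![3,5,9,0,6,1,4,11,14,2,12,7,10,15,8,13], ![4,9,10,5,0,3,11,14,13,1,2,6,15,8,7,12], ![5,3,1,4,11,9,0,6,7,10,15,14,2,12,13,8], ![6,2,12,1,3,0,7,8,15,5,9,4,13,14,11,10], ![7,12,13,2,1,6,8,15,10,0,5,3,14,11,4,9], ![8,13,14,12,2,7,15,10,9,6,0,1,11,4,3,5], ![9,4,3,11,14,10,5,0,6,15,8,13,1,2,12,7], ![10,11,4,14,13,15,9,5,0,8,7,12,3,1,2,6], ![11,10,15,9,5,4,14,13,12,3,1,0,8,7,6,2], ![12,7,6,8,15,13,2,1,3,14,11,10,0,5,9,4],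 ![13,8,7,15,10,14,12,2,1,11,4,9,6,0,5,3], ![14,15,8,10,9,11,13,12,2,4,3,5,7,6,0,1], ![15,14,11,13,12,8,10,9,5,7,6,2,4,3,1,0]]
def itab : Fin 16 → Fin 16 := ![0,1,2,3,4,6,5,9,10,7,8,11,12,13,14,15]
def ttab : Fin 8 → Fin 16 := ![0,1,2,10,9,3,4,5]

open Equiv Equiv.Perm in
instance (f g : Equiv.Perm (Fin 8)) : Decidable (f.Disjoint g) :=
  decidable_of_iff (∀ x, f x = x ∨ g x = x) Iff.rfl

lemma gv_mul : ∀ i j : Fin 16, gv i * gv j = gv (mtab i j) := by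
  intro i j; exact Equiv.ext (by revert i j; decide)

lemma gv_inv : ∀ i : Fin 16, (gv i)⁻¹ = gv (itab i) := by
  intro i; exact Equiv.ext (by revert i; decide)

lemma gv_one : gv 0 = 1 := Equiv.ext (by decide)

def H : Subgroup (Equiv.Perm (Fin 8)) where
  carrier := Set.range gv
  one_mem' := ⟨0, gv_one⟩
  mul_mem' := by rintro a b ⟨i, rfl⟩ ⟨j, rfl⟩; exact ⟨mtab i j, (gv_mul i j).symm⟩
  inv_mem' := by rintro a ⟨i, rfl⟩; exact ⟨itab i, (gv_inv i).symm⟩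

lemma gv_injective : Function.Injective gv := by
  have h : Function.Injective (fun i => ((gv i) 0, (gv i) 1)) := by decide
  intro i j hij
  exact h (by simp [hij])

lemma cycleType2 (x₁ y₁ x₂ y₂ x₃ y₃ : Fin 8) (σ : Equiv.Perm (Fin 8))
    (hσ : σ = Equiv.swap x₁ y₁ * Equiv.swap x₂ y₂ * Equiv.swap x₃ y₃)
    (hd : List.Pairwise Equiv.Perm.Disjoint
      [Equiv.swap x₁ y₁, Equiv.swap x₂ y₂, Equiv.swap x₃ y₃])
    (h1 : x₁ ≠ y₁) (h2 : x₂ ≠ y₂) (h3 : x₃ ≠ y₃) :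
    σ.cycleType = {2, 2, 2} := by
  have h := Equiv.Perm.cycleType_eq (σ := σ)
    [Equiv.swap x₁ y₁, Equiv.swap x₂ y₂, Equiv.swap x₃ y₃]
    (by simp [hσ, mul_assoc])
    (by intro τ hτ; fin_cases hτ
        exacts [Equiv.Perm.isCycle_swap h1, Equiv.Perm.isCycle_swap h2,
          Equiv.Perm.isCycle_swap h3]) hd
  rw [h]
  simp [Equiv.Perm.card_support_swap, h1, h2, h3]
  rfl

lemma cycleType3 (x₁ y₁ x₂ y₂ x₃ y₃ x₄ y₄ : Fin 8) (σ : Equiv.Perm (Fin 8))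
    (hσ : σ = Equiv.swap x₁ y₁ * Equiv.swap x₂ y₂ * Equiv.swap x₃ y₃ * Equiv.swap x₄ y₄)
    (hd : List.Pairwise Equiv.Perm.Disjoint
      [Equiv.swap x₁ y₁, Equiv.swap x₂ y₂, Equiv.swap x₃ y₃, Equiv.swap x₄ y₄])
    (h1 : x₁ ≠ y₁) (h2 : x₂ ≠ y₂) (h3 : x₃ ≠ y₃) (h4 : x₄ ≠ y₄) :
    σ.cycleType = {2, 2, 2, 2} := by
  have h := Equiv.Perm.cycleType_eq (σ := σ)
    [Equiv.swap x₁ y₁, Equiv.swap x₂ y₂, Equiv.swap x₃ y₃, Equiv.swap x₄ y₄]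
    (by simp [hσ, mul_assoc])
    (by intro τ hτ; fin_cases hτ
        exacts [Equiv.Perm.isCycle_swap h1, Equiv.Perm.isCycle_swap h2,
          Equiv.Perm.isCycle_swap h3, Equiv.Perm.isCycle_swap h4]) hd
  rw [h]
  simp [Equiv.Perm.card_support_swap, h1, h2, h3, h4]
  rfl

/-- There is a branch-cycle tuple in `S₈` of cycle types `(2⁴, 2³, 2³, 2⁴)`
with product one generating a transitive subgroup of order 16. -/
theorem stmt_4 : ∃ σ₁ σ₂ σ₃ σ₄ : Equiv.Perm (Fin 8),
    σ₁.cycleType = {2, 2, 2, 2} ∧ σ₂.cycleType = {2, 2, 2} ∧ σ₃.cycleType = {2, 2, 2} ∧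
    σ₄.cycleType = {2, 2, 2, 2} ∧
    σ₁ * σ₂ * σ₃ * σ₄ = 1 ∧
    (∀ a b : Fin 8,
      ∃ g ∈ Subgroup.closure ({σ₁, σ₂, σ₃, σ₄} : Set (Equiv.Perm (Fin 8))), g a = b) ∧
    Nat.card (Subgroup.closure ({σ₁, σ₂, σ₃, σ₄} : Set (Equiv.Perm (Fin 8)))) = 16 := by
  refine ⟨gv 1, gv 2, gv 3, gv 4, ?_, ?_, ?_, ?_, ?_, ?_, ?_⟩
  · exact cycleType3 0 1 2 7 3 4 5 6 _ (Equiv.ext (by decide)) (by decide)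
      (by decide) (by decide) (by decide) (by decide)
  · exact cycleType2 0 2 1 6 3 7 _ (Equiv.ext (by decide)) (by decide)
      (by decide) (by decide) (by decide)
  · exact cycleType2 0 5 1 7 2 4 _ (Equiv.ext (by decide)) (by decide)
      (by decide) (by decide) (by decide)
  · exact cycleType3 0 6 1 4 2 3 5 7 _ (Equiv.ext (by decide)) (by decide)
      (by decide) (by decide) (by decide) (by decide)
  · rw [gv_mul, gv_mul, gv_mul]; exact gv_one
  all_goals {
    set C := Subgroup.closure ({gv 1, gv 2, gv 3, gv 4} : Set (Equiv.Perm (Fin 8))) with hCdef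
    have h1 : gv 1 ∈ C := Subgroup.subset_closure (by simp)
    have h2 : gv 2 ∈ C := Subgroup.subset_closure (by simp)
    have h3 : gv 3 ∈ C := Subgroup.subset_closure (by simp)
    have h4 : gv 4 ∈ C := Subgroup.subset_closure (by simp)
    have hmem : ∀ i : Fin 16, gv i ∈ C := by
      have m5 : gv 5 ∈ C := (gv_mul 1 2) ▸ mul_mem h1 h2
      have m6 : gv 6 ∈ C := (gv_mul 1 3) ▸ mul_mem h1 h3
      have m7 : gv 7 ∈ C := (gv_mul 1 4) ▸ mul_mem h1 h4
      have m8 : gv 8 ∈ C := (gv_mul 2 4) ▸ mul_mem h2 h4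
      have m9 : gv 9 ∈ C := (gv_mul 3 2) ▸ mul_mem h3 h2
      have m10 : gv 10 ∈ C := (gv_mul 4 2) ▸ mul_mem h4 h2
      have m11 : gv 11 ∈ C := (gv_mul 5 4) ▸ mul_mem m5 h4
      have m12 : gv 12 ∈ C := (gv_mul 6 2) ▸ mul_mem m6 h2
      have m13 : gv 13 ∈ C := (gv_mul 7 2) ▸ mul_mem m7 h2
      have m14 : gv 14 ∈ C := (gv_mul 8 2) ▸ mul_mem m8 h2
      have m15 : gv 15 ∈ C := (gv_mul 11 2) ▸ mul_mem m11 h2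
      have m0 : gv 0 ∈ C := gv_one ▸ one_mem C
      intro i
      fin_cases i
      exacts [m0, h1, h2, h3, h4, m5, m6, m7, m8, m9, m10, m11, m12, m13, m14, m15]
    first
    | -- transitivity
      (intro a b
       refine ⟨gv (ttab b) * (gv (ttab a))⁻¹, mul_mem (hmem _) (inv_mem (hmem _)), ?_⟩
       revert a b; decide)
    | -- cardinality
      (have hCH : C = H := by
         apply le_antisymm
         · rw [hCdef, Subgroup.closure_le]
           rintro x (rfl | rfl | rfl | rfl)
           exacts [⟨1, rfl⟩, ⟨2, rfl⟩, ⟨3, rfl⟩, ⟨4, rfl⟩]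
         · rintro x ⟨i, rfl⟩; exact hmem i
       rw [hCdef.trans hCH]
       have : Nat.card H = Nat.card (Set.range gv) := rfl
       rw [this, Nat.card_range_of_injective gv_injective, Nat.card_eq_fintype_card,
         Fintype.card_fin]) }
end

section
/- There exist permutations σ₁, σ₂, σ₃, σ₄ in the symmetric group S₈ on 8 letters such that: σ₁ and σ₂ each have cycle type {2,2,2} (a product of three disjoint transpositions), σ₃ has cycle type {4,2} (a 4-cycle times a disjoint transposition), σ₄ has cycle type {2,2,2,2} (a product of four disjoint transpositions), σ₁σ₂σ₃σ₄ = 1, and σ₁, σ₂, σ₃, σ₄ generate the full symmetric group S₈. -/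
open Equiv Equiv.Perm
set_option maxRecDepth 10000

private def p (l : List (Fin 8)) : Equiv.Perm (Fin 8) := l.formPerm

private lemma ct_list (l : List (Fin 8)) (h1 : l.Nodup) (h2 : 2 ≤ l.length) :
    (p l).cycleType = {l.length} := by
  have h' : ∀ x : Fin 8, l ≠ [x] := by
    intro x hx; rw [hx] at h2; simp at h2
  rw [p, (List.isCycle_formPerm h1 h2).cycleType,
    List.support_formPerm_of_nodup l h1 h', List.toFinset_card_of_nodup h1]

private def τ₁ : Equiv.Perm (Fin 8) := p [0,6] * (p [1,5] * p [2,4])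
private def τ₂ : Equiv.Perm (Fin 8) := p [1,2] * (p [3,6] * p [4,5])
private def τ₃ : Equiv.Perm (Fin 8) := p [0,2,6,7] * p [3,5]
private def τ₄ : Equiv.Perm (Fin 8) := p [0,5] * (p [1,4] * (p [2,3] * p [6,7]))

private lemma ct1 : τ₁.cycleType = {2,2,2} := by
  have d1 : Equiv.Perm.Disjoint (p [1,5]) (p [2,4]) := by
    show ∀ x : Fin 8, _ ∨ _; decide
  have d2 : Equiv.Perm.Disjoint (p [0,6]) (p [1,5] * p [2,4]) := by
    show ∀ x : Fin 8, _ ∨ _; decide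
  rw [τ₁, Equiv.Perm.Disjoint.cycleType_mul d2, Equiv.Perm.Disjoint.cycleType_mul d1, ct_list _ (by decide) (by decide),
    ct_list _ (by decide) (by decide), ct_list _ (by decide) (by decide)]
  rfl

private lemma ct2 : τ₂.cycleType = {2,2,2} := by
  have d1 : Equiv.Perm.Disjoint (p [3,6]) (p [4,5]) := by
    show ∀ x : Fin 8, _ ∨ _; decide
  have d2 : Equiv.Perm.Disjoint (p [1,2]) (p [3,6] * p [4,5]) := by
    show ∀ x : Fin 8, _ ∨ _; decide
  rw [τ₂, Equiv.Perm.Disjoint.cycleType_mul d2, Equiv.Perm.Disjoint.cycleType_mul d1, ct_list _ (by decide) (by decide),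
    ct_list _ (by decide) (by decide), ct_list _ (by decide) (by decide)]
  rfl

private lemma ct3 : τ₃.cycleType = {4,2} := by
  have d1 : Equiv.Perm.Disjoint (p [0,2,6,7]) (p [3,5]) := by
    show ∀ x : Fin 8, _ ∨ _; decide
  rw [τ₃, Equiv.Perm.Disjoint.cycleType_mul d1, ct_list _ (by decide) (by decide),
    ct_list _ (by decide) (by decide)]
  rfl

private lemma ct4 : τ₄.cycleType = {2,2,2,2} := by
  have d1 : Equiv.Perm.Disjoint (p [2,3]) (p [6,7]) := by
    show ∀ x : Fin 8, _ ∨ _; decide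
  have d2 : Equiv.Perm.Disjoint (p [1,4]) (p [2,3] * p [6,7]) := by
    show ∀ x : Fin 8, _ ∨ _; decide
  have d3 : Equiv.Perm.Disjoint (p [0,5]) (p [1,4] * (p [2,3] * p [6,7])) := by
    show ∀ x : Fin 8, _ ∨ _; decide
  rw [τ₄, Equiv.Perm.Disjoint.cycleType_mul d3, Equiv.Perm.Disjoint.cycleType_mul d2, Equiv.Perm.Disjoint.cycleType_mul d1, ct_list _ (by decide) (by decide),
    ct_list _ (by decide) (by decide), ct_list _ (by decide) (by decide),
    ct_list _ (by decide) (by decide)]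
  rfl

private lemma prod_one : τ₁ * τ₂ * τ₃ * τ₄ = 1 := by decide

private lemma rot_eq : finRotate 8 = τ₂ * τ₃ := by decide

private lemma swap_eq : Equiv.swap (6 : Fin 8) 7 = (τ₁ * τ₃) ^ 3 := by decide

private lemma gen_top :
    Subgroup.closure ({τ₁, τ₂, τ₃, τ₄} : Set (Equiv.Perm (Fin 8))) = ⊤ := by
  set S : Set (Equiv.Perm (Fin 8)) := {τ₁, τ₂, τ₃, τ₄}
  have h1 : τ₁ ∈ Subgroup.closure S := Subgroup.subset_closure (by simp [S])
  have h2 : τ₂ ∈ Subgroup.closure S := Subgroup.subset_closure (by simp [S])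
  have h3 : τ₃ ∈ Subgroup.closure S := Subgroup.subset_closure (by simp [S])
  have hc : finRotate 8 ∈ Subgroup.closure S := by
    rw [rot_eq]; exact mul_mem h2 h3
  have hs : Equiv.swap (6 : Fin 8) (finRotate 8 6) ∈ Subgroup.closure S := by
    have : finRotate 8 (6 : Fin 8) = 7 := by decide
    rw [this, swap_eq]
    exact pow_mem (mul_mem h1 h3) 3
  rw [eq_top_iff, ← closure_cycle_adjacent_swap (isCycle_finRotate (n := 6))
    (support_finRotate (n := 6)) (6 : Fin 8), Subgroup.closure_le]
  intro g hg
  rcases hg with rfl | hg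
  · exact hc
  · rw [Set.mem_singleton_iff] at hg; subst hg; exact hs

/-- There is a branch-cycle tuple in `S₈` of cycle types `(2³, 2³, (4)(2), 2⁴)`
with product one generating the full `S₈`. -/
theorem stmt_5 : ∃ σ₁ σ₂ σ₃ σ₄ : Equiv.Perm (Fin 8),
    σ₁.cycleType = {2, 2, 2} ∧ σ₂.cycleType = {2, 2, 2} ∧ σ₃.cycleType = {4, 2} ∧
    σ₄.cycleType = {2, 2, 2, 2} ∧
    σ₁ * σ₂ * σ₃ * σ₄ = 1 ∧
    Subgroup.closure ({σ₁, σ₂, σ₃, σ₄} : Set (Equiv.Perm (Fin 8))) = ⊤ := by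
  exact ⟨τ₁, τ₂, τ₃, τ₄, ct1, ct2, ct3, ct4, prod_one, gen_top⟩
end

section
/- There exist permutations σ₁, σ₂, σ₃, σ₄ in the symmetric group S₈ on 8 letters such that: σ₁, σ₂, σ₃ each have cycle type {2,2,2} (a product of three disjoint transpositions), σ₄ has cycle type {4,2,2} (a 4-cycle times two disjoint transpositions), σ₁σ₂σ₃σ₄ = 1, and σ₁, σ₂, σ₃, σ₄ generate the full symmetric group S₈. -/
open Equiv Equiv.Perm

private lemma ct_fp (l : List (Fin 8)) (hl : l.Nodup) (hn : 2 ≤ l.length) :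
    (l.formPerm).cycleType = {l.length} := by
  rw [(List.isCycle_formPerm hl hn).cycleType,
    List.support_formPerm_of_nodup l hl (fun x h => by simp [h] at hn),
    List.card_toFinset, List.dedup_eq_self.mpr hl]

private lemma ct3_s6 (a b c : Perm (Fin 8))
    (hab : a.Disjoint b) (hac : a.Disjoint c) (hbc : b.Disjoint c)
    (ha : a.cycleType = {2}) (hb : b.cycleType = {2}) (hc : c.cycleType = {2}) :
    (a * b * c).cycleType = {2, 2, 2} := by
  rw [mul_assoc, (hab.mul_right hac).cycleType_mul, hbc.cycleType_mul, ha, hb, hc]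
  rfl

set_option maxRecDepth 8000 in
/-- There is a branch-cycle tuple in `S₈` of cycle types `(2³, 2³, 2³, (4)(2)²)`
with product one generating the full `S₈`. -/
theorem stmt_6 : ∃ σ₁ σ₂ σ₃ σ₄ : Equiv.Perm (Fin 8),
    σ₁.cycleType = {2, 2, 2} ∧ σ₂.cycleType = {2, 2, 2} ∧ σ₃.cycleType = {2, 2, 2} ∧
    σ₄.cycleType = {4, 2, 2} ∧
    σ₁ * σ₂ * σ₃ * σ₄ = 1 ∧
    Subgroup.closure ({σ₁, σ₂, σ₃, σ₄} : Set (Equiv.Perm (Fin 8))) = ⊤ := by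
  refine ⟨[(0:Fin 8),2].formPerm * [(1:Fin 8),4].formPerm * [(5:Fin 8),7].formPerm,
    [(2:Fin 8),5].formPerm * [(3:Fin 8),4].formPerm * [(6:Fin 8),7].formPerm,
    [(0:Fin 8),6].formPerm * [(4:Fin 8),7].formPerm * [(2:Fin 8),3].formPerm,
    [(1:Fin 8),2,6,4].formPerm * [(0:Fin 8),5].formPerm * [(3:Fin 8),7].formPerm,
    ?_, ?_, ?_, ?_, ?_, ?_⟩
  · exact ct3_s6 _ _ _ (fun x => by revert x; decide) (fun x => by revert x; decide)
      (fun x => by revert x; decide)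
      (ct_fp _ (by decide) (by decide)) (ct_fp _ (by decide) (by decide))
      (ct_fp _ (by decide) (by decide))
  · exact ct3_s6 _ _ _ (fun x => by revert x; decide) (fun x => by revert x; decide)
      (fun x => by revert x; decide)
      (ct_fp _ (by decide) (by decide)) (ct_fp _ (by decide) (by decide))
      (ct_fp _ (by decide) (by decide))
  · exact ct3_s6 _ _ _ (fun x => by revert x; decide) (fun x => by revert x; decide)
      (fun x => by revert x; decide)
      (ct_fp _ (by decide) (by decide)) (ct_fp _ (by decide) (by decide))
      (ct_fp _ (by decide) (by decide))
  · have hab : ([(1:Fin 8),2,6,4].formPerm).Disjoint ([(0:Fin 8),5].formPerm) := by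
      intro x; revert x; decide
    have hac : ([(1:Fin 8),2,6,4].formPerm).Disjoint ([(3:Fin 8),7].formPerm) := by
      intro x; revert x; decide
    have hbc : ([(0:Fin 8),5].formPerm).Disjoint ([(3:Fin 8),7].formPerm) := by
      intro x; revert x; decide
    rw [mul_assoc, (hab.mul_right hac).cycleType_mul, hbc.cycleType_mul,
      ct_fp _ (by decide) (by decide), ct_fp _ (by decide) (by decide),
      ct_fp _ (by decide) (by decide)]
    rfl
  · decide
  · set σ₁ := [(0:Fin 8),2].formPerm * [(1:Fin 8),4].formPerm * [(5:Fin 8),7].formPerm with hσ₁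
    set σ₂ := [(2:Fin 8),5].formPerm * [(3:Fin 8),4].formPerm * [(6:Fin 8),7].formPerm with hσ₂
    set σ₃ := [(0:Fin 8),6].formPerm * [(4:Fin 8),7].formPerm * [(2:Fin 8),3].formPerm with hσ₃
    set σ₄ := [(1:Fin 8),2,6,4].formPerm * [(0:Fin 8),5].formPerm * [(3:Fin 8),7].formPerm with hσ₄
    set c : Perm (Fin 8) := [(0:Fin 8),3,4,2,6,5,1,7].formPerm with hc_def
    have hc : c.IsCycle := List.isCycle_formPerm (by decide) (by decide)
    have hsup : c.support = Finset.univ := by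
      ext x
      simp only [Finset.mem_univ, iff_true, mem_support]
      revert x; decide
    have key := closure_cycle_adjacent_swap hc hsup 7
    rw [eq_top_iff, ← key]
    refine (Subgroup.closure_le _).2 ?_
    have h1 : σ₁ ∈ Subgroup.closure ({σ₁, σ₂, σ₃, σ₄} : Set (Perm (Fin 8))) :=
      Subgroup.subset_closure (by simp)
    have h2 : σ₂ ∈ Subgroup.closure ({σ₁, σ₂, σ₃, σ₄} : Set (Perm (Fin 8))) :=
      Subgroup.subset_closure (by simp)
    have h3 : σ₃ ∈ Subgroup.closure ({σ₁, σ₂, σ₃, σ₄} : Set (Perm (Fin 8))) :=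
      Subgroup.subset_closure (by simp)
    have h4 : σ₄ ∈ Subgroup.closure ({σ₁, σ₂, σ₃, σ₄} : Set (Perm (Fin 8))) :=
      Subgroup.subset_closure (by simp)
    have hcmem : c ∈ Subgroup.closure ({σ₁, σ₂, σ₃, σ₄} : Set (Perm (Fin 8))) := by
      have : c = σ₁ * σ₃ * σ₂ * σ₄ * σ₂ := by rw [hc_def, hσ₁, hσ₂, hσ₃, hσ₄]; decide
      rw [this]
      exact mul_mem (mul_mem (mul_mem (mul_mem h1 h3) h2) h4) h2
    have htmem : Equiv.swap (7 : Fin 8) (c 7) ∈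
        Subgroup.closure ({σ₁, σ₂, σ₃, σ₄} : Set (Perm (Fin 8))) := by
      have : Equiv.swap (7 : Fin 8) (c 7) =
          σ₁ * σ₂ * σ₃ * σ₂ * σ₄ * σ₂ * σ₄ * σ₄ * σ₂ * σ₄ * σ₂ * σ₄ * σ₂ := by
        rw [hc_def, hσ₁, hσ₂, hσ₃, hσ₄]; decide
      rw [this]
      exact mul_mem (mul_mem (mul_mem (mul_mem (mul_mem (mul_mem (mul_mem (mul_mem (mul_mem
        (mul_mem (mul_mem (mul_mem h1 h2) h3) h2) h4) h2) h4) h4) h2) h4) h2) h4) h2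
    rintro x (rfl | rfl)
    · exact hcmem
    · exact htmem
end

section
/- There exist permutations σ₁, σ₂, σ₃, σ₄ in the symmetric group S₈ on 8 letters such that: σ₁ has cycle type {3,2,2} (a 3-cycle times two disjoint transpositions), σ₂ and σ₃ each have cycle type {2,2,2} (a product of three disjoint transpositions), σ₄ has cycle type {2,2,2,2} (a product of four disjoint transpositions), σ₁σ₂σ₃σ₄ = 1, and σ₁, σ₂, σ₃, σ₄ generate the full symmetric group S₈. -/
set_option maxRecDepth 4000

open Equiv Equiv.Perm Finset

private instance inst_s7 (f g : Equiv.Perm (Fin 8)) : Decidable (f.Disjoint g) :=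
  decidable_of_iff (∀ x, f x = x ∨ g x = x) Iff.rfl

private def u0 : Equiv.Perm (Fin 8) := Equiv.swap 3 4 * Equiv.swap 4 5

private def t1 : Equiv.Perm (Fin 8) := u0 * Equiv.swap 0 6 * Equiv.swap 1 7
private def t2 : Equiv.Perm (Fin 8) := Equiv.swap 0 3 * Equiv.swap 2 4 * Equiv.swap 6 7
private def t3 : Equiv.Perm (Fin 8) := Equiv.swap 0 1 * Equiv.swap 2 3 * Equiv.swap 4 6
private def t4 : Equiv.Perm (Fin 8) :=
  Equiv.swap 0 7 * Equiv.swap 1 4 * Equiv.swap 2 6 * Equiv.swap 3 5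

private lemma isCycle_u0 : u0.IsCycle := by
  refine ⟨3, by decide, ?_⟩
  intro y hy
  fin_cases y
  · exact absurd (by decide) hy
  · exact absurd (by decide) hy
  · exact absurd (by decide) hy
  · exact ⟨0, by decide⟩
  · exact ⟨1, by decide⟩
  · exact ⟨2, by decide⟩
  · exact absurd (by decide) hy
  · exact absurd (by decide) hy

private lemma ct1_s7 : t1.cycleType = {3, 2, 2} := by
  rw [cycleType_eq [u0, Equiv.swap 0 6, Equiv.swap 1 7] (by decide)
    (by
      intro σ hσ
      simp only [List.mem_cons, List.not_mem_nil, or_false] at hσ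
      rcases hσ with h | h | h <;> subst h
      · exact isCycle_u0
      · exact isCycle_swap (by decide)
      · exact isCycle_swap (by decide))
    (by decide)]
  decide

private lemma ct2_s7 : t2.cycleType = {2, 2, 2} := by
  rw [cycleType_eq [Equiv.swap 0 3, Equiv.swap 2 4, Equiv.swap 6 7] (by decide)
    (by
      intro σ hσ
      simp only [List.mem_cons, List.not_mem_nil, or_false] at hσ
      rcases hσ with h | h | h <;> subst h <;> exact isCycle_swap (by decide))
    (by decide)]
  decide

private lemma ct3_s7 : t3.cycleType = {2, 2, 2} := by
  rw [cycleType_eq [Equiv.swap 0 1, Equiv.swap 2 3, Equiv.swap 4 6] (by decide)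
    (by
      intro σ hσ
      simp only [List.mem_cons, List.not_mem_nil, or_false] at hσ
      rcases hσ with h | h | h <;> subst h <;> exact isCycle_swap (by decide))
    (by decide)]
  decide

private lemma ct4_s7 : t4.cycleType = {2, 2, 2, 2} := by
  rw [cycleType_eq [Equiv.swap 0 7, Equiv.swap 1 4, Equiv.swap 2 6, Equiv.swap 3 5] (by decide)
    (by
      intro σ hσ
      simp only [List.mem_cons, List.not_mem_nil, or_false] at hσ
      rcases hσ with h | h | h | h <;> subst h <;> exact isCycle_swap (by decide))
    (by decide)]
  decide

/-- There is a branch-cycle tuple in `S₈` of cycle types `((3)(2)², 2³, 2³, 2⁴)`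
with product one generating the full `S₈`. -/
theorem stmt_7 : ∃ σ₁ σ₂ σ₃ σ₄ : Equiv.Perm (Fin 8),
    σ₁.cycleType = {3, 2, 2} ∧ σ₂.cycleType = {2, 2, 2} ∧ σ₃.cycleType = {2, 2, 2} ∧
    σ₄.cycleType = {2, 2, 2, 2} ∧
    σ₁ * σ₂ * σ₃ * σ₄ = 1 ∧
    Subgroup.closure ({σ₁, σ₂, σ₃, σ₄} : Set (Equiv.Perm (Fin 8))) = ⊤ := by
  refine ⟨t1, t2, t3, t4, ct1_s7, ct2_s7, ct3_s7, ct4_s7, by decide, ?_⟩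
  set S : Set (Equiv.Perm (Fin 8)) := {t1, t2, t3, t4} with hS
  have h1 : t1 ∈ Subgroup.closure S := Subgroup.subset_closure (by simp [hS])
  have h2 : t2 ∈ Subgroup.closure S := Subgroup.subset_closure (by simp [hS])
  have h3 : t3 ∈ Subgroup.closure S := Subgroup.subset_closure (by simp [hS])
  have h4 : t4 ∈ Subgroup.closure S := Subgroup.subset_closure (by simp [hS])
  have hrot : (finRotate 8 : Equiv.Perm (Fin 8)) ∈ Subgroup.closure S := by
    have h : (finRotate 8 : Equiv.Perm (Fin 8)) =
        t1⁻¹ * t3 * t1 * t1 * t2 * t1 * t4 * t2 * t1 := by decide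
    rw [h]
    exact mul_mem (mul_mem (mul_mem (mul_mem (mul_mem (mul_mem (mul_mem (mul_mem
      (inv_mem h1) h3) h1) h1) h2) h1) h4) h2) h1
  have hsw : Equiv.swap (0 : Fin 8) (finRotate 8 0) ∈ Subgroup.closure S := by
    have h : Equiv.swap (0 : Fin 8) (finRotate 8 0) =
        t2 * t3 * t2 * t1 * t1 * t4 * t2 * t3 := by decide
    rw [h]
    exact mul_mem (mul_mem (mul_mem (mul_mem (mul_mem (mul_mem (mul_mem h2 h3) h2) h1) h1) h4)
      h2) h3
  have key : Subgroup.closure ({finRotate 8, Equiv.swap (0 : Fin 8) (finRotate 8 0)} :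
      Set (Equiv.Perm (Fin 8))) = ⊤ :=
    closure_cycle_adjacent_swap isCycle_finRotate support_finRotate 0
  rw [eq_top_iff, ← key, Subgroup.closure_le]
  rintro g (rfl | rfl)
  · exact hrot
  · exact hsw
end

section
/- For every even integer n ≥ 4, there exist permutations σ₁, σ₂, σ₃, σ₄, σ₅ in the symmetric group Sₙ on n letters such that: σ₁, σ₂, σ₃ each have cycle type consisting of (n-2)/2 copies of 2 (each is a product of (n-2)/2 disjoint transpositions), σ₄ has cycle type consisting of n/2 copies of 2 (a fixed-point-free involution), σ₅ has cycle type {2} (a single transposition), σ₁σ₂σ₃σ₄σ₅ = 1, and the subgroup of Sₙ generated by σ₁, …, σ₅ is transitive on the n letters. -/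
namespace Stmt8Aux

variable {n : ℕ}

/-- swap of `i` and `i+1` in `Fin n` (identity if out of range). -/
def sw (n i : ℕ) : Equiv.Perm (Fin n) :=
  if h : i + 1 < n then Equiv.swap ⟨i, Nat.lt_of_succ_lt h⟩ ⟨i + 1, h⟩ else 1

/-- product of swaps `(a a+1)(a+2 a+3)...` with `k` factors. -/
def T (n a k : ℕ) : Equiv.Perm (Fin n) :=
  ((List.range k).map (fun i => sw n (a + 2 * i))).prod

lemma sw_def (i : ℕ) (h : i + 1 < n) :
    sw n i = Equiv.swap ⟨i, Nat.lt_of_succ_lt h⟩ ⟨i + 1, h⟩ := dif_pos h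

lemma sw_apply_of_ne (i : ℕ) (x : Fin n) (h1 : x.val ≠ i) (h2 : x.val ≠ i + 1) :
    sw n i x = x := by
  unfold sw
  split
  · apply Equiv.swap_apply_of_ne_of_ne <;>
      · intro hx
        rw [Fin.ext_iff] at hx
        simp at hx
        omega
  · rfl

lemma sw_apply_pair (i : ℕ) (x y : Fin n) (hx : x.val = i + 1) (hy : y.val = i) :
    sw n i x = y := by
  have h : i + 1 < n := hx ▸ x.isLt
  have hx' : x = ⟨i + 1, h⟩ := Fin.ext hx
  have hy' : y = ⟨i, Nat.lt_of_succ_lt h⟩ := Fin.ext hy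
  rw [sw_def i h, hx', hy', Equiv.swap_apply_right]

lemma sw_sq (i : ℕ) : sw n i * sw n i = 1 := by
  unfold sw
  split
  · exact Equiv.swap_mul_self _ _
  · simp

lemma disjoint_sw_T (b a k : ℕ) (hb : b + 2 ≤ a) :
    (sw n b).Disjoint (T n a k) := by
  apply Equiv.Perm.disjoint_prod_right
  intro g hg
  simp only [List.mem_map, List.mem_range] at hg
  obtain ⟨i, _, rfl⟩ := hg
  intro x
  by_cases hx : x.val = b ∨ x.val = b + 1
  · right; apply sw_apply_of_ne <;> omega
  · left; apply sw_apply_of_ne <;> omega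

lemma T_succ (a k : ℕ) : T n a (k + 1) = sw n a * T n (a + 2) k := by
  unfold T
  rw [List.range_succ_eq_map, List.map_cons, List.prod_cons, List.map_map]
  congr 3
  funext i
  simp only [Function.comp_apply, Function.comp]
  congr 1
  omega

lemma T_apply_of_lt (a k : ℕ) (x : Fin n) (hx : x.val < a) : T n a k x = x := by
  induction k generalizing a with
  | zero => rfl
  | succ k ih =>
    rw [T_succ, Equiv.Perm.mul_apply, ih (a + 2) (by omega)]
    exact sw_apply_of_ne _ _ (by omega) (by omega)

lemma T_apply_odd (a k i : ℕ) (x y : Fin n) (hik : i < k)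
    (hx : x.val = a + 2 * i + 1) (hy : y.val = a + 2 * i) : T n a k x = y := by
  induction k generalizing a i x y with
  | zero => omega
  | succ k ih =>
    rw [T_succ, Equiv.Perm.mul_apply]
    rcases Nat.eq_zero_or_pos i with rfl | hi
    · rw [T_apply_of_lt (a + 2) k x (by omega)]
      exact sw_apply_pair a x y (by omega) (by omega)
    · rw [ih (a + 2) (i - 1) x y (by omega) (by omega) (by omega)]
      exact sw_apply_of_ne _ _ (by omega) (by omega)

lemma T_sq (a k : ℕ) : T n a k * T n a k = 1 := by
  induction k generalizing a with
  | zero => rfl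
  | succ k ih =>
    rw [T_succ]
    have hc : Commute (sw n a) (T n (a + 2) k) :=
      (disjoint_sw_T a (a + 2) k (by omega)).commute
    calc sw n a * T n (a + 2) k * (sw n a * T n (a + 2) k)
        = sw n a * (T n (a + 2) k * sw n a) * T n (a + 2) k := by group
      _ = sw n a * (sw n a * T n (a + 2) k) * T n (a + 2) k := by rw [hc.eq]
      _ = (sw n a * sw n a) * (T n (a + 2) k * T n (a + 2) k) := by group
      _ = 1 := by rw [sw_sq, ih, one_mul]

lemma cycleType_sw (i : ℕ) (h : i + 1 < n) : (sw n i).cycleType = {2} := by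
  rw [sw_def i h]
  have hne : (⟨i, Nat.lt_of_succ_lt h⟩ : Fin n) ≠ ⟨i + 1, h⟩ := by
    simp [Fin.ext_iff]
  rw [(Equiv.Perm.isCycle_swap hne).cycleType, Equiv.Perm.support_swap hne]
  simp [Finset.card_insert_of_notMem, hne]

lemma cycleType_T (a k : ℕ) (h : a + 2 * k ≤ n) :
    (T n a k).cycleType = Multiset.replicate k 2 := by
  induction k generalizing a with
  | zero => simp [T]
  | succ k ih =>
    rw [T_succ, (disjoint_sw_T a (a + 2) k (by omega)).cycleType_mul,
      cycleType_sw a (by omega), ih (a + 2) (by omega), Multiset.replicate_succ]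
    rfl

end Stmt8Aux

open Stmt8Aux in
/-- Generic Type I branch-cycle tuple of even degree `n ≥ 4`:
cycle types `(2^((n-2)/2), 2^((n-2)/2), 2^((n-2)/2), 2^(n/2), 2)`,
product one, generating a transitive subgroup of `Sₙ`. -/
theorem stmt_8 (n : ℕ) (hn : Even n) (hn4 : 4 ≤ n) :
    ∃ σ₁ σ₂ σ₃ σ₄ σ₅ : Equiv.Perm (Fin n),
      σ₁.cycleType = Multiset.replicate ((n - 2) / 2) 2 ∧
      σ₂.cycleType = Multiset.replicate ((n - 2) / 2) 2 ∧
      σ₃.cycleType = Multiset.replicate ((n - 2) / 2) 2 ∧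
      σ₄.cycleType = Multiset.replicate (n / 2) 2 ∧
      σ₅.cycleType = {2} ∧
      σ₁ * σ₂ * σ₃ * σ₄ * σ₅ = 1 ∧
      ∀ a b : Fin n,
        ∃ g ∈ Subgroup.closure ({σ₁, σ₂, σ₃, σ₄, σ₅} : Set (Equiv.Perm (Fin n))), g a = b := by
  obtain ⟨m, hm⟩ := hn
  have hm2 : 2 ≤ m := by omega
  set σ₁ := T n 1 (m - 1) with hσ₁
  set σ₃ := T n 2 (m - 1) with hσ₃
  set σ₄ := T n 0 m with hσ₄
  set σ₅ := sw n 0 with hσ₅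
  refine ⟨σ₁, σ₁, σ₃, σ₄, σ₅, ?_, ?_, ?_, ?_, ?_, ?_, ?_⟩
  · rw [hσ₁, cycleType_T 1 (m - 1) (by omega)]; congr 1; omega
  · rw [hσ₁, cycleType_T 1 (m - 1) (by omega)]; congr 1; omega
  · rw [hσ₃, cycleType_T 2 (m - 1) (by omega)]; congr 1; omega
  · rw [hσ₄, cycleType_T 0 m (by omega)]; congr 1; omega
  · rw [hσ₅]; exact cycleType_sw 0 (by omega)
  · -- product is one
    have h4 : σ₄ = σ₅ * σ₃ := by
      rw [hσ₄, hσ₅, hσ₃, show m = (m - 1) + 1 from by omega, T_succ]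
      norm_num
    have hc : Commute σ₅ σ₃ := (disjoint_sw_T 0 2 (m - 1) (by omega)).commute
    calc σ₁ * σ₁ * σ₃ * σ₄ * σ₅
        = (σ₁ * σ₁) * (σ₃ * (σ₅ * σ₃) * σ₅) := by rw [h4]; group
      _ = (σ₁ * σ₁) * (σ₃ * (σ₃ * σ₅) * σ₅) := by rw [hc.eq]
      _ = (σ₁ * σ₁) * ((σ₃ * σ₃) * (σ₅ * σ₅)) := by group
      _ = 1 := by rw [hσ₁, hσ₃, hσ₅, T_sq, T_sq, sw_sq]; simp
  · -- transitivity
    intro a b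
    set S : Set (Equiv.Perm (Fin n)) := {σ₁, σ₁, σ₃, σ₄, σ₅} with hS
    have h1S : σ₁ ∈ Subgroup.closure S := Subgroup.subset_closure (by simp [hS])
    have h4S : σ₄ ∈ Subgroup.closure S := Subgroup.subset_closure (by simp [hS])
    have hz : (0 : ℕ) < n := by omega
    have key : ∀ j : ℕ, ∀ x : Fin n, x.val = j →
        ∃ g ∈ Subgroup.closure S, g x = ⟨0, hz⟩ := by
      intro j
      induction j using Nat.strong_induction_on with
      | _ j ih =>
        intro x hx
        rcases Nat.eq_zero_or_pos j with rfl | hj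
        · exact ⟨1, Subgroup.one_mem _, Fin.ext (by simp [hx])⟩
        rcases Nat.even_or_odd j with he | ho
        · -- j even, j > 0 : j = 1 + 2*i + 1 with i < m - 1, use σ₁
          obtain ⟨t, ht⟩ := he
          set i := t - 1 with hi
          have hyn : 1 + 2 * i < n := by omega
          set y : Fin n := ⟨1 + 2 * i, hyn⟩ with hy
          have hmap : σ₁ x = y := by
            rw [hσ₁]
            exact T_apply_odd 1 (m - 1) i x y (by omega) (by omega) (by simp [hy])
          obtain ⟨g, hg, hg0⟩ := ih (1 + 2 * i) (by omega) y rfl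
          exact ⟨g * σ₁, mul_mem hg h1S, by rw [Equiv.Perm.mul_apply, hmap, hg0]⟩
        · -- j odd : j = 0 + 2*i + 1 with i < m, use σ₄
          obtain ⟨i, hi⟩ := ho
          have hyn : 2 * i < n := by omega
          set y : Fin n := ⟨2 * i, hyn⟩ with hy
          have hmap : σ₄ x = y := by
            rw [hσ₄]
            exact T_apply_odd 0 m i x y (by omega) (by omega) (by simp [hy])
          obtain ⟨g, hg, hg0⟩ := ih (2 * i) (by omega) y rfl
          exact ⟨g * σ₄, mul_mem hg h4S, by rw [Equiv.Perm.mul_apply, hmap, hg0]⟩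
    obtain ⟨g, hg, hga⟩ := key a.val a rfl
    obtain ⟨h, hh, hhb⟩ := key b.val b rfl
    refine ⟨h⁻¹ * g, mul_mem (inv_mem hh) hg, ?_⟩
    rw [Equiv.Perm.mul_apply, hga, ← hhb]
    simp
end

section
/- For every even integer n ≥ 6, there exist permutations σ₁, σ₂, σ₃, σ₄, σ₅ in the symmetric group Sₙ on n letters such that: σ₁ has cycle type consisting of (n-4)/2 copies of 2, σ₂ has cycle type consisting of (n-2)/2 copies of 2, σ₃ and σ₄ each have cycle type consisting of n/2 copies of 2 (fixed-point-free involutions), σ₅ has cycle type {2} (a single transposition), σ₁σ₂σ₃σ₄σ₅ = 1, and the subgroup of Sₙ generated by σ₁, …, σ₅ is transitive on the n letters. -/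
lemma invol_cycleType {α : Type*} [Fintype α] [DecidableEq α] (σ : Equiv.Perm α)
    (h2 : σ * σ = 1) (k : ℕ) (hk : k ≠ 0) (hc : σ.support.card = 2 * k) :
    σ.cycleType = Multiset.replicate k 2 := by
  have h1 : σ ≠ 1 := by
    intro h
    rw [h, Equiv.Perm.support_one, Finset.card_empty] at hc
    omega
  have ho : orderOf σ = 2 := orderOf_eq_prime (by rw [pow_two]; exact h2) h1
  obtain ⟨m, hm⟩ := Equiv.Perm.cycleType_prime_order (σ := σ) (by rw [ho]; exact Nat.prime_two)
  rw [ho] at hm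
  have hs := Equiv.Perm.sum_cycleType σ
  rw [hm, Multiset.sum_replicate, hc, smul_eq_mul] at hs
  have : m + 1 = k := by omega
  rw [hm, this]

/-- Generic Type II branch-cycle tuple of even degree `n ≥ 6`:
cycle types `(2^((n-4)/2), 2^((n-2)/2), 2^(n/2), 2^(n/2), 2)`,
product one, generating a transitive subgroup of `Sₙ`. -/
theorem stmt_9 (n : ℕ) (hn : Even n) (hn6 : 6 ≤ n) :
    ∃ σ₁ σ₂ σ₃ σ₄ σ₅ : Equiv.Perm (Fin n),
      σ₁.cycleType = Multiset.replicate ((n - 4) / 2) 2 ∧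
      σ₂.cycleType = Multiset.replicate ((n - 2) / 2) 2 ∧
      σ₃.cycleType = Multiset.replicate (n / 2) 2 ∧
      σ₄.cycleType = Multiset.replicate (n / 2) 2 ∧
      σ₅.cycleType = {2} ∧
      σ₁ * σ₂ * σ₃ * σ₄ * σ₅ = 1 ∧
      ∀ a b : Fin n,
        ∃ g ∈ Subgroup.closure ({σ₁, σ₂, σ₃, σ₄, σ₅} : Set (Equiv.Perm (Fin n))), g a = b := by
  haveI : NeZero n := ⟨by omega⟩
  obtain ⟨m, hm⟩ := hn
  have hm3 : 3 ≤ m := by omega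
  -- basic value computations
  have hv0 : ((0 : Fin n) : ℕ) = 0 := rfl
  have hv1 : ((1 : Fin n) : ℕ) = 1 := by
    rw [Fin.val_one']; exact Nat.mod_eq_of_lt (by omega)
  have hv2 : ((2 : Fin n) : ℕ) = 2 := by
    have : (2 : Fin n) = 1 + 1 := by open Fin.CommRing in norm_num
    rw [this, Fin.val_add, hv1]; exact Nat.mod_eq_of_lt (by omega)
  have hvneg1 : ((-1 : Fin n) : ℕ) = n - 1 := by
    have h' : (⟨n - 1, by omega⟩ : Fin n) + 1 = 0 := by
      rw [Fin.ext_iff, Fin.val_add, hv1, hv0]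
      show (n - 1 + 1) % n = 0
      rw [Nat.sub_add_cancel (by omega), Nat.mod_self]
    have := eq_neg_of_add_eq_zero_left h'
    rw [← this]
  set half : Fin n := ⟨m, by omega⟩ with hhalf
  have hhalfval : (half : ℕ) = m := rfl
  set oh : Fin n := ⟨1 + m, by omega⟩ with hoh
  have hohval : (oh : ℕ) = 1 + m := rfl
  -- doubling facts
  have hdbl : ∀ x : Fin n, (x.val + x.val < n ∧ ((x + x : Fin n) : ℕ) = x.val + x.val) ∨
      (n ≤ x.val + x.val ∧ ((x + x : Fin n) : ℕ) = x.val + x.val - n) := by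
    intro x
    rw [Fin.val_add]
    rcases lt_or_ge (x.val + x.val) n with h | h
    · exact Or.inl ⟨h, Nat.mod_eq_of_lt h⟩
    · refine Or.inr ⟨h, ?_⟩
      rw [Nat.mod_eq_sub_mod h, Nat.mod_eq_of_lt (by omega)]
  have hkey0 : ∀ x : Fin n, x + x = 0 ↔ (x = 0 ∨ x = half) := by
    intro x
    have hx := x.is_lt
    rcases hdbl x with ⟨hb, h⟩ | ⟨hb, h⟩ <;>
      · simp only [Fin.ext_iff, hv0, hhalfval, h]; omega
  have hkey1 : ∀ x : Fin n, x + x ≠ 1 := by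
    intro x hx
    have hx' := x.is_lt
    rcases hdbl x with ⟨hb, h⟩ | ⟨hb, h⟩ <;>
      · rw [Fin.ext_iff, h, hv1] at hx; omega
  have hkeyneg1 : ∀ x : Fin n, x + x ≠ -1 := by
    intro x hx
    have hx' := x.is_lt
    rcases hdbl x with ⟨hb, h⟩ | ⟨hb, h⟩ <;>
      · rw [Fin.ext_iff, h, hvneg1] at hx; omega
  have hkey2 : ∀ x : Fin n, x + x = 2 ↔ (x = 1 ∨ x = oh) := by
    intro x
    have hx := x.is_lt
    rcases hdbl x with ⟨hb, h⟩ | ⟨hb, h⟩ <;>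
      · simp only [Fin.ext_iff, hv2, hv1, hohval, h]; omega
  -- the permutations
  set σ₅ : Equiv.Perm (Fin n) := Equiv.swap 0 2 with hσ₅def
  set ρ : Equiv.Perm (Fin n) := Equiv.subLeft (2 : Fin n) with hρdef
  set σ₁ : Equiv.Perm (Fin n) := σ₅ * ρ with hσ₁def
  set σ₂ : Equiv.Perm (Fin n) := Equiv.subLeft (0 : Fin n) with hσ₂def
  set σ₃ : Equiv.Perm (Fin n) := Equiv.subLeft (-1 : Fin n) with hσ₃def
  set σ₄ : Equiv.Perm (Fin n) := Equiv.subLeft (1 : Fin n) with hσ₄def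
  -- distinctness of special points
  have hne02 : (0 : Fin n) ≠ 2 := by rw [Ne, Fin.ext_iff, hv0, hv2]; omega
  have hne10 : (1 : Fin n) ≠ 0 := by rw [Ne, Fin.ext_iff, hv0, hv1]; omega
  have hne12 : (1 : Fin n) ≠ 2 := by rw [Ne, Fin.ext_iff, hv1, hv2]; omega
  have hneoh0 : oh ≠ 0 := by rw [Ne, Fin.ext_iff, hohval, hv0]; omega
  have hneoh2 : oh ≠ 2 := by rw [Ne, Fin.ext_iff, hohval, hv2]; omega
  -- the key function identity : σ₅ ∘ ρ ∘ σ₅ = ρ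
  have hkeyfun : ∀ y : Fin n, σ₅ ((2 : Fin n) - σ₅ y) = 2 - y := by
    intro y
    rcases eq_or_ne y 0 with rfl | h0
    · rw [hσ₅def, Equiv.swap_apply_left, sub_self, sub_zero, Equiv.swap_apply_left]
    rcases eq_or_ne y 2 with rfl | h2
    · rw [hσ₅def, Equiv.swap_apply_right, sub_zero, sub_self, Equiv.swap_apply_right]
    · have hy : σ₅ y = y := Equiv.swap_apply_of_ne_of_ne h0 h2
      rw [hy]
      have hne0 : (2 : Fin n) - y ≠ 0 := fun h => h2 ((sub_eq_zero.mp h).symm)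
      have hne2 : (2 : Fin n) - y ≠ 2 := fun h => h0 (sub_eq_self.mp h)
      exact Equiv.swap_apply_of_ne_of_ne hne0 hne2
  -- involutions
  have hσ₁app : ∀ x : Fin n, σ₁ x = σ₅ ((2 : Fin n) - x) := by
    intro x; rw [hσ₁def, Equiv.Perm.mul_apply, hρdef, Equiv.subLeft_apply]
  have hσ₁2 : σ₁ * σ₁ = 1 := by
    ext x
    rw [Equiv.Perm.mul_apply, hσ₁app, hσ₁app, hkeyfun, sub_sub_cancel, Equiv.Perm.one_apply]
  have hσ₂2 : σ₂ * σ₂ = 1 := by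
    ext x
    rw [hσ₂def, Equiv.Perm.mul_apply, Equiv.subLeft_apply, Equiv.subLeft_apply,
      sub_sub_cancel, Equiv.Perm.one_apply]
  have hσ₃2 : σ₃ * σ₃ = 1 := by
    ext x
    rw [hσ₃def, Equiv.Perm.mul_apply, Equiv.subLeft_apply, Equiv.subLeft_apply,
      sub_sub_cancel, Equiv.Perm.one_apply]
  have hσ₄2 : σ₄ * σ₄ = 1 := by
    ext x
    rw [hσ₄def, Equiv.Perm.mul_apply, Equiv.subLeft_apply, Equiv.subLeft_apply,
      sub_sub_cancel, Equiv.Perm.one_apply]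
  have hσ₅2 : σ₅ * σ₅ = 1 := Equiv.swap_mul_self 0 2
  -- supports
  have hmdiv : n / 2 = m := by omega
  have hsup4 : σ₄.support = Finset.univ := by
    refine Finset.eq_univ_iff_forall.mpr fun x => ?_
    rw [Equiv.Perm.mem_support, hσ₄def, Equiv.subLeft_apply]
    intro hfix
    rw [sub_eq_iff_eq_add] at hfix
    exact hkey1 x hfix.symm
  have hsup3 : σ₃.support = Finset.univ := by
    refine Finset.eq_univ_iff_forall.mpr fun x => ?_
    rw [Equiv.Perm.mem_support, hσ₃def, Equiv.subLeft_apply]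
    intro hfix
    rw [sub_eq_iff_eq_add] at hfix
    exact hkeyneg1 x hfix.symm
  have hsup2 : σ₂.support = Finset.univ \ {0, half} := by
    ext x
    rw [Equiv.Perm.mem_support, hσ₂def, Equiv.subLeft_apply, Finset.mem_sdiff]
    simp only [Finset.mem_univ, true_and, Finset.mem_insert, Finset.mem_singleton]
    refine not_congr ?_
    rw [sub_eq_iff_eq_add]
    exact eq_comm.trans (hkey0 x)
  have hsup1 : σ₁.support = Finset.univ \ {0, 1, 2, oh} := by
    ext x
    rw [Equiv.Perm.mem_support, Finset.mem_sdiff]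
    simp only [Finset.mem_univ, true_and, Finset.mem_insert, Finset.mem_singleton]
    rw [not_iff_not.symm, not_not, not_not, hσ₁app]
    constructor
    · intro hfix
      rcases eq_or_ne x 0 with rfl | h0
      · exact Or.inl rfl
      rcases eq_or_ne x 2 with rfl | h2
      · exact Or.inr (Or.inr (Or.inl rfl))
      · have hne0 : (2 : Fin n) - x ≠ 0 := fun h => h2 ((sub_eq_zero.mp h).symm)
        have hne2 : (2 : Fin n) - x ≠ 2 := fun h => h0 (sub_eq_self.mp h)
        rw [Equiv.swap_apply_of_ne_of_ne hne0 hne2, sub_eq_iff_eq_add] at hfix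
        rcases (hkey2 x).mp hfix.symm with h | h
        · exact Or.inr (Or.inl h)
        · exact Or.inr (Or.inr (Or.inr h))
    · rintro (rfl | rfl | rfl | rfl)
      · rw [sub_zero, hσ₅def, Equiv.swap_apply_right]
      · have h21 : (2 : Fin n) - 1 = 1 := by
          have : (2 : Fin n) = 1 + 1 := by open Fin.CommRing in norm_num
          rw [this, add_sub_cancel_right]
        rw [h21, hσ₅def]
        exact Equiv.swap_apply_of_ne_of_ne hne10 hne12
      · rw [sub_self, hσ₅def, Equiv.swap_apply_left]
      · have hoh2 : (2 : Fin n) - oh = oh := by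
          rw [sub_eq_iff_eq_add]
          exact ((hkey2 oh).mpr (Or.inr rfl)).symm
        rw [hoh2, hσ₅def]
        exact Equiv.swap_apply_of_ne_of_ne hneoh0 hneoh2
  -- cardinalities
  have hne0half : (0 : Fin n) ≠ half := by rw [Ne, Fin.ext_iff, hv0, hhalfval]; omega
  have hcard2 : σ₂.support.card = n - 2 := by
    rw [hsup2, Finset.card_sdiff_of_subset (Finset.subset_univ _), Finset.card_univ, Fintype.card_fin,
      Finset.card_pair hne0half]
  have hcard4set : ({0, 1, 2, oh} : Finset (Fin n)).card = 4 := by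
    have e0 : (0 : Fin n) ∉ ({1, 2, oh} : Finset (Fin n)) := by
      simp only [Finset.mem_insert, Finset.mem_singleton, Fin.ext_iff, hv0, hv1, hv2, hohval,
        not_or]
      omega
    have e1 : (1 : Fin n) ∉ ({2, oh} : Finset (Fin n)) := by
      simp only [Finset.mem_insert, Finset.mem_singleton, Fin.ext_iff, hv1, hv2, hohval, not_or]
      omega
    have e2 : (2 : Fin n) ∉ ({oh} : Finset (Fin n)) := by
      simp only [Finset.mem_singleton, Fin.ext_iff, hv2, hohval]
      omega
    rw [Finset.card_insert_of_notMem e0, Finset.card_insert_of_notMem e1,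
      Finset.card_insert_of_notMem e2, Finset.card_singleton]
  have hcard1 : σ₁.support.card = n - 4 := by
    rw [hsup1, Finset.card_sdiff_of_subset (Finset.subset_univ _), Finset.card_univ, Fintype.card_fin,
      hcard4set]
  -- cycle types
  have hct1 : σ₁.cycleType = Multiset.replicate ((n - 4) / 2) 2 := by
    refine invol_cycleType σ₁ hσ₁2 _ (by omega) ?_
    rw [hcard1]; omega
  have hct2 : σ₂.cycleType = Multiset.replicate ((n - 2) / 2) 2 := by
    refine invol_cycleType σ₂ hσ₂2 _ (by omega) ?_
    rw [hcard2]; omega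
  have hct3 : σ₃.cycleType = Multiset.replicate (n / 2) 2 := by
    refine invol_cycleType σ₃ hσ₃2 _ (by omega) ?_
    rw [hsup3, Finset.card_univ, Fintype.card_fin]; omega
  have hct4 : σ₄.cycleType = Multiset.replicate (n / 2) 2 := by
    refine invol_cycleType σ₄ hσ₄2 _ (by omega) ?_
    rw [hsup4, Finset.card_univ, Fintype.card_fin]; omega
  have hct5 : σ₅.cycleType = {2} := by
    have := invol_cycleType σ₅ hσ₅2 1 one_ne_zero ?_
    · rwa [Multiset.replicate_one] at this
    · rw [hσ₅def, Equiv.Perm.support_swap hne02, Finset.card_pair hne02]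
  -- the product is one
  have hprod : σ₁ * σ₂ * σ₃ * σ₄ * σ₅ = 1 := by
    ext x
    have hmid : (0 : Fin n) - (-1 - (1 - σ₅ x)) = 2 - σ₅ x := by open Fin.CommRing in ring
    simp only [Equiv.Perm.mul_apply]
    rw [hσ₄def, hσ₃def, hσ₂def, Equiv.subLeft_apply, Equiv.subLeft_apply, Equiv.subLeft_apply,
      hmid, hσ₁app, sub_sub_cancel, Equiv.Perm.one_apply, hσ₅def, Equiv.swap_apply_self]
  -- transitivity
  have htrans : ∀ a b : Fin n,
      ∃ g ∈ Subgroup.closure ({σ₁, σ₂, σ₃, σ₄, σ₅} : Set (Equiv.Perm (Fin n))), g a = b := by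
    have happτ : ∀ x : Fin n, (σ₂ * σ₄) x = x - 1 := by
      intro x
      rw [Equiv.Perm.mul_apply, hσ₄def, hσ₂def, Equiv.subLeft_apply, Equiv.subLeft_apply]
      open Fin.CommRing in ring
    open Fin.CommRing in
    have hpow : ∀ (k : ℕ) (x : Fin n), ((σ₂ * σ₄) ^ k) x = x - (k : Fin n) := by
      intro k
      induction k with
      | zero => intro x; simp
      | succ k ih =>
        intro x
        rw [pow_succ, Equiv.Perm.mul_apply, happτ, ih, Nat.cast_add, Nat.cast_one,
          sub_sub, add_comm (1 : Fin n)]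
    intro a b
    refine ⟨(σ₂ * σ₄) ^ (a - b).val, ?_, ?_⟩
    · refine Subgroup.pow_mem _ (mul_mem ?_ ?_) _
      · exact Subgroup.subset_closure (by simp)
      · exact Subgroup.subset_closure (by simp)
    · open Fin.CommRing in
      rw [hpow, Fin.cast_val_eq_self, sub_sub_cancel]
  exact ⟨σ₁, σ₂, σ₃, σ₄, σ₅, hct1, hct2, hct3, hct4, hct5, hprod, htrans⟩
end

section
/- For every even integer n ≥ 4, there exist permutations σ₁, σ₂, σ₃, σ₄ in the symmetric group Sₙ on n letters such that: σ₁ and σ₄ each have cycle type consisting of n/2 copies of 2 (fixed-point-free involutions), σ₂ and σ₃ each have cycle type consisting of (n-2)/2 copies of 2, σ₁σ₂σ₃σ₄ = 1, and the subgroup of Sₙ generated by σ₁, σ₂, σ₃, σ₄ is transitive on the n letters. -/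
open Fin.CommRing

/-- Cycle type of an involution: all twos. -/
lemma involution_cycleType {α : Type*} [DecidableEq α] [Fintype α] (σ : Equiv.Perm α)
    (h : σ * σ = 1) :
    σ.cycleType = Multiset.replicate (σ.support.card / 2) 2 := by
  have h2 : ∀ a ∈ σ.cycleType, a = 2 := by
    intro a ha
    have hd : a ∣ 2 := by
      have hl := Multiset.dvd_lcm ha
      rw [Equiv.Perm.lcm_cycleType] at hl
      exact hl.trans (orderOf_dvd_of_pow_eq_one (by rw [pow_two]; exact h))
    exact Nat.le_antisymm (Nat.le_of_dvd two_pos hd)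
      (Equiv.Perm.two_le_of_mem_cycleType ha)
  have hr := Multiset.eq_replicate_card.mpr h2
  have hs : σ.cycleType.sum = σ.support.card := Equiv.Perm.sum_cycleType σ
  rw [hr] at hs ⊢
  rw [Multiset.sum_replicate, smul_eq_mul] at hs
  congr 1
  omega

/-- Type I degeneration 1 for even `n ≥ 4`:
cycle types `(2^(n/2), 2^((n-2)/2), 2^((n-2)/2), 2^(n/2))`,
product one, generating a transitive subgroup of `Sₙ`. -/
theorem stmt_11 (n : ℕ) (hn : Even n) (hn4 : 4 ≤ n) :
    ∃ σ₁ σ₂ σ₃ σ₄ : Equiv.Perm (Fin n),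
      σ₁.cycleType = Multiset.replicate (n / 2) 2 ∧
      σ₂.cycleType = Multiset.replicate ((n - 2) / 2) 2 ∧
      σ₃.cycleType = Multiset.replicate ((n - 2) / 2) 2 ∧
      σ₄.cycleType = Multiset.replicate (n / 2) 2 ∧
      σ₁ * σ₂ * σ₃ * σ₄ = 1 ∧
      ∀ a b : Fin n,
        ∃ g ∈ Subgroup.closure ({σ₁, σ₂, σ₃, σ₄} : Set (Equiv.Perm (Fin n))), g a = b := by
  haveI : NeZero n := ⟨by omega⟩
  obtain ⟨m, hm⟩ := hn
  have hm2 : 2 ≤ m := by omega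
  set σ₁ : Equiv.Perm (Fin n) := Equiv.subLeft (1 : Fin n) with hσ₁
  set σ₂ : Equiv.Perm (Fin n) := Equiv.neg (Fin n) with hσ₂
  have hσ₁app : ∀ x : Fin n, σ₁ x = 1 - x := fun x => rfl
  have hσ₂app : ∀ x : Fin n, σ₂ x = -x := fun x => rfl
  have h1sq : σ₁ * σ₁ = 1 := by
    ext x
    simp [hσ₁app]
  have h2sq : σ₂ * σ₂ = 1 := by
    ext x
    simp [hσ₂app]
  -- σ₁ has no fixed points
  have hfix1 : ∀ x : Fin n, σ₁ x ≠ x := by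
    intro x hx
    rw [hσ₁app, sub_eq_iff_eq_add] at hx
    have hv : (1 : Fin n).val = (x + x).val := congrArg Fin.val hx
    rw [Fin.val_add, Fin.val_one'] at hv
    have h1 : 1 % n = 1 := Nat.mod_eq_of_lt (by omega)
    have hdm := Nat.div_add_mod (x.val + x.val) n
    set q := (x.val + x.val) / n with hq
    have : Even (n * q) := ⟨m * q, by rw [hm]; ring⟩
    obtain ⟨c, hc⟩ := this
    omega
  -- fixed points of σ₂ are 0 and m
  have hmlt : m < n := by omega
  have hfix2 : ∀ x : Fin n, σ₂ x = x ↔ (x = 0 ∨ x = ⟨m, hmlt⟩) := by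
    intro x
    rw [hσ₂app, neg_eq_iff_add_eq_zero]
    constructor
    · intro hx
      have hv : (x + x).val = (0 : Fin n).val := congrArg Fin.val hx
      rw [Fin.val_add, Fin.val_zero] at hv
      have hdvd : n ∣ x.val + x.val := Nat.dvd_of_mod_eq_zero hv
      obtain ⟨q, hq⟩ := hdvd
      have hxlt : x.val < n := x.isLt
      have hq2 : q < 2 := by
        by_contra hq2
        push_neg at hq2
        have : n * 2 ≤ n * q := Nat.mul_le_mul_left n hq2
        omega
      interval_cases q
      · left
        have hx0 : x.val = 0 := by omega
        exact Fin.ext (by simp [hx0])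
      · right
        exact Fin.ext (show x.val = m by omega)
    · intro hx
      rcases hx with hx | hx
      · subst hx; simp
      · subst hx
        apply Fin.ext
        rw [Fin.val_add, Fin.val_zero]
        simp only
        have : m + m = n := by omega
        rw [this, Nat.mod_self]
  -- support computations
  have hsupp1 : σ₁.support = Finset.univ := by
    ext x
    simp [Equiv.Perm.mem_support, hfix1 x]
  have hcard1 : σ₁.support.card = n := by
    rw [hsupp1, Finset.card_univ, Fintype.card_fin]
  have hsupp2c : σ₂.supportᶜ = ({0, ⟨m, hmlt⟩} : Finset (Fin n)) := by
    ext x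
    simp [Equiv.Perm.mem_support, hfix2 x]
    tauto
  have hne0m : (0 : Fin n) ≠ ⟨m, hmlt⟩ := by
    intro h
    have := congrArg Fin.val h
    simp at this
    omega
  have hcard2 : σ₂.support.card = n - 2 := by
    have hc : σ₂.supportᶜ.card = 2 := by
      rw [hsupp2c, Finset.card_insert_of_notMem (by simpa using hne0m),
        Finset.card_singleton]
    have := Finset.card_compl σ₂.support
    rw [Fintype.card_fin] at this
    have hle : σ₂.support.card ≤ n := by
      have := Finset.card_le_card (Finset.subset_univ σ₂.support)
      simpa using this
    omega
  -- translation by 1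
  have hτ : ∀ x : Fin n, (σ₁ * σ₂) x = x + 1 := by
    intro x
    simp [Equiv.Perm.mul_apply, hσ₁app, hσ₂app]
    ring
  have hτpow : ∀ (k : ℕ) (a : Fin n), ((σ₁ * σ₂) ^ k) a = a + (k : Fin n) := by
    intro k
    induction k with
    | zero => intro a; simp
    | succ k ih =>
      intro a
      rw [pow_succ', Equiv.Perm.mul_apply, hτ, ih]
      push_cast
      ring
  refine ⟨σ₁, σ₂, σ₂, σ₁, ?_, ?_, ?_, ?_, ?_, ?_⟩
  · rw [involution_cycleType σ₁ h1sq, hcard1]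
  · rw [involution_cycleType σ₂ h2sq, hcard2]
  · rw [involution_cycleType σ₂ h2sq, hcard2]
  · rw [involution_cycleType σ₁ h1sq, hcard1]
  · calc σ₁ * σ₂ * σ₂ * σ₁ = σ₁ * (σ₂ * σ₂) * σ₁ := by group
    _ = 1 := by rw [h2sq, mul_one, h1sq]
  · intro a b
    refine ⟨(σ₁ * σ₂) ^ (b - a).val, ?_, ?_⟩
    · exact pow_mem (mul_mem (Subgroup.subset_closure (by simp))
        (Subgroup.subset_closure (by simp))) _
    · rw [hτpow, Fin.cast_val_eq_self]
      ring
end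

section
/- For every even integer n ≥ 8, there exist permutations σ₁, σ₂, σ₃, σ₄ in the symmetric group Sₙ on n letters such that: σ₁ and σ₂ each have cycle type consisting of (n-2)/2 copies of 2, σ₃ has cycle type consisting of one 4 together with (n-6)/2 copies of 2 (a 4-cycle times (n-6)/2 disjoint transpositions), σ₄ has cycle type consisting of n/2 copies of 2 (a fixed-point-free involution), σ₁σ₂σ₃σ₄ = 1, and the subgroup of Sₙ generated by σ₁, σ₂, σ₃, σ₄ is transitive on the n letters. -/
open Equiv Equiv.Perm Function Finset
open scoped Fin.NatCast Fin.IntCast Fin.CommRing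

namespace Stmt12Aux

/-- Cycle type of an involution. -/
lemma cycleType_of_sq {β : Type*} [DecidableEq β] [Fintype β] {σ : Perm β}
    (h : σ * σ = 1) : σ.cycleType = Multiset.replicate (σ.support.card / 2) 2 := by
  have horder : orderOf σ ∣ 2 := orderOf_dvd_of_pow_eq_one (by rw [pow_two]; exact h)
  have hmem : ∀ x ∈ σ.cycleType, x = 2 := by
    intro x hx
    have h1 : x ∣ 2 := dvd_trans
      (by rw [← Equiv.Perm.lcm_cycleType]; exact Multiset.dvd_lcm hx) horder
    have h2 : 2 ≤ x := Equiv.Perm.two_le_of_mem_cycleType hx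
    exact Nat.le_antisymm (Nat.le_of_dvd (by norm_num) h1) h2
  have hrep := Multiset.eq_replicate_card.mpr hmem
  have hsum := σ.sum_cycleType
  rw [hrep, Multiset.sum_replicate, smul_eq_mul] at hsum
  rw [hrep, ← hsum]
  congr 1
  omega

section
variable (j : ℕ)

instance : NeZero (2*j+8) := ⟨by omega⟩

private abbrev α := Fin (2*j+8)

private lemma v0 : (0 : α j).val = 0 := rfl
private lemma v1 : (1 : α j).val = 1 := by
  rw [show (1 : α j) = ((1:ℕ) : α j) from rfl, Fin.val_cast_of_lt (by omega)]
private lemma v2 : (2 : α j).val = 2 := by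
  rw [show (2 : α j) = ((2:ℕ) : α j) from rfl, Fin.val_cast_of_lt (by omega)]
private lemma v3 : (3 : α j).val = 3 := by
  rw [show (3 : α j) = ((3:ℕ) : α j) from rfl, Fin.val_cast_of_lt (by omega)]
private lemma v4 : (4 : α j).val = 4 := by
  rw [show (4 : α j) = ((4:ℕ) : α j) from rfl, Fin.val_cast_of_lt (by omega)]
private lemma v5 : (5 : α j).val = 5 := by
  rw [show (5 : α j) = ((5:ℕ) : α j) from rfl, Fin.val_cast_of_lt (by omega)]
private lemma v6 : (6 : α j).val = 6 := by
  rw [show (6 : α j) = ((6:ℕ) : α j) from rfl, Fin.val_cast_of_lt (by omega)]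
private lemma v7 : (7 : α j).val = 7 := by
  rw [show (7 : α j) = ((7:ℕ) : α j) from rfl, Fin.val_cast_of_lt (by omega)]

private lemma modN {a b : ℕ} (h1 : a = b ∨ a = 2*j+8 + b) (hb : b < 2*j+8) :
    a % (2*j+8) = b := by
  rcases h1 with rfl | rfl
  · exact Nat.mod_eq_of_lt hb
  · rw [Nat.add_mod_left]; exact Nat.mod_eq_of_lt hb

private lemma val_add2 (x : α j) (h : x.val + 2 < 2*j+8) : (x + 2).val = x.val + 2 := by
  rw [Fin.add_def]; exact modN j (Or.inl (by rw [v2])) h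

private lemma val_2add (x : α j) (h : x.val + 2 < 2*j+8) : ((2 : α j) + x).val = x.val + 2 := by
  rw [Fin.add_def, v2]; exact modN j (Or.inl (by omega)) h

private lemma val_sub2 (x : α j) (h : 2 ≤ x.val) : (x - 2).val = x.val - 2 := by
  have hx := x.isLt
  rw [Fin.sub_def, v2]
  exact modN j (Or.inr (by omega)) (by omega)

private lemma val_3sub (x : α j) (h : 4 ≤ x.val) : ((3 : α j) - x).val = 2*j+8 + 3 - x.val := by
  have hx := x.isLt
  rw [Fin.sub_def, v3]
  exact modN j (Or.inl (by omega)) (by omega)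

private lemma val_5sub (x : α j) (h : 6 ≤ x.val) : ((5 : α j) - x).val = 2*j+8 + 5 - x.val := by
  have hx := x.isLt
  rw [Fin.sub_def, v5]
  exact modN j (Or.inl (by omega)) (by omega)

private lemma fe {x : α j} {c : ℕ} (h : x.val = c) (hc : c < 2*j+8) : x = ((c:ℕ) : α j) :=
  Fin.ext (by rw [h, Fin.val_cast_of_lt hc])

/-- underlying function of σ₄ -/
private def f4 : α j → α j := fun i =>
  if i.val < 2 then i + 2 else if i.val < 4 then i - 2 else 3 - i

private lemma hf4 : Involutive (f4 j) := by
  intro i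
  have hi := i.isLt
  unfold f4
  by_cases h2 : i.val < 2
  · rw [if_pos h2]
    have hv : (i + 2).val = i.val + 2 := val_add2 j i (by omega)
    rw [if_neg (by omega), if_pos (by omega)]
    ring
  · by_cases h4 : i.val < 4
    · rw [if_neg h2, if_pos h4]
      have hv : (i - 2).val = i.val - 2 := val_sub2 j i (by omega)
      rw [if_pos (by omega)]
      ring
    · rw [if_neg h2, if_neg h4]
      have hv : ((3 : α j) - i).val = 2*j+8 + 3 - i.val := val_3sub j i (by omega)
      rw [if_neg (by omega), if_neg (by omega)]
      ring

/-- underlying function of ρ, the 2-cycle part of σ₃ -/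
private def frho : α j → α j := fun i => if i.val < 6 then i else 5 - i

private lemma hfrho : Involutive (frho j) := by
  intro i
  have hi := i.isLt
  unfold frho
  by_cases h6 : i.val < 6
  · rw [if_pos h6, if_pos h6]
  · rw [if_neg h6]
    have hv : ((5 : α j) - i).val = 2*j+8 + 5 - i.val := val_5sub j i (by omega)
    rw [if_neg (by omega)]
    ring

private def s1 : Perm (α j) := Equiv.neg (α j)
private def s2 : Perm (α j) := Equiv.subLeft 2
private def C : Perm (α j) := List.formPerm [0, 4, 1, 5]
private def rho : Perm (α j) := (hfrho j).toPerm _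
private def s3 : Perm (α j) := C j * rho j
private def s4 : Perm (α j) := (hf4 j).toPerm _

private lemma s1_apply (x : α j) : s1 j x = -x := rfl
private lemma s2_apply (x : α j) : s2 j x = 2 - x := rfl
private lemma rho_apply (x : α j) : rho j x = frho j x := rfl
private lemma s4_apply (x : α j) : s4 j x = f4 j x := rfl

private lemma nodupC : ([0, 4, 1, 5] : List (α j)).Nodup := by
  simp [List.nodup_cons, Fin.ext_iff, v0, v1, v4, v5, Nat.mod_eq_of_lt (show 4 < 2*j+8 by omega), Nat.mod_eq_of_lt (show 5 < 2*j+8 by omega), Nat.mod_eq_of_lt (show 1 < 2*j+8 by omega)]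

private lemma C_apply_of (x : α j) (h : x.val ∉ ({0, 4, 1, 5} : Set ℕ)) : C j x = x := by
  apply List.formPerm_apply_of_notMem
  simp only [Set.mem_insert_iff, Set.mem_singleton_iff, not_or] at h
  simp only [List.mem_cons, List.not_mem_nil, or_false, Fin.ext_iff, v0, v1, v4, v5, not_or]
  omega

private lemma C_eval : C j 0 = 4 ∧ C j 4 = 1 ∧ C j 1 = 5 ∧ C j 5 = 0 := by
  have e : C j = Equiv.swap 0 4 * (Equiv.swap 4 1 * Equiv.swap 1 5) := by
    simp [C, List.formPerm_cons_cons, List.formPerm_singleton, mul_assoc]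
  have ne : ∀ a b : α j, a.val ≠ b.val → a ≠ b := fun a b h hh => h (by rw [hh])
  refine ⟨?_, ?_, ?_, ?_⟩ <;>
    rw [e] <;>
    simp only [Perm.mul_apply] <;>
    rw [Equiv.swap_apply_def, Equiv.swap_apply_def, Equiv.swap_apply_def] <;>
    simp [Fin.ext_iff, v0, v1, v2, v3, v4, v5, Nat.mod_eq_of_lt (show 4 < 2*j+8 by omega), Nat.mod_eq_of_lt (show 5 < 2*j+8 by omega), Nat.mod_eq_of_lt (show 1 < 2*j+8 by omega)]

private lemma s1_sq : s1 j * s1 j = 1 := by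
  ext x; simp [Perm.mul_apply, s1_apply]

private lemma s2_sq : s2 j * s2 j = 1 := by
  ext x; simp [Perm.mul_apply, s2_apply]

private lemma s1_fix (x : α j) : s1 j x = x ↔ (x.val = 0 ∨ x.val = j+4) := by
  have hx := x.isLt
  have hnv : (-x).val = (2*j+8 - x.val) % (2*j+8) := congrArg Fin.val (Fin.neg_def x)
  rw [s1_apply, Fin.ext_iff, hnv]
  rcases Nat.eq_zero_or_pos x.val with h0 | hpos
  · rw [h0, Nat.sub_zero, Nat.mod_self]
    omega
  · rw [Nat.mod_eq_of_lt (by omega)]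
    omega

private lemma s2_fix (x : α j) : s2 j x = x ↔ (x.val = 1 ∨ x.val = j+5) := by
  have hx := x.isLt
  rw [s2_apply, Fin.ext_iff, Fin.sub_def]
  show (2*j+8 - x.val + (2:α j).val) % (2*j+8) = x.val ↔ _
  rw [v2]
  rcases le_or_gt x.val 2 with h | h
  · rw [show 2*j+8 - x.val + 2 = (2*j+8) + (2 - x.val) from by omega, Nat.add_mod_left,
      Nat.mod_eq_of_lt (by omega)]
    omega
  · rw [Nat.mod_eq_of_lt (by omega)]
    omega

private lemma s1_card : (s1 j).support.card = 2*j+6 := by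
  have hs : (s1 j).support = ({0, ((j+4:ℕ) : α j)} : Finset (α j))ᶜ := by
    ext x
    simp only [Equiv.Perm.mem_support, Finset.mem_compl, Finset.mem_insert, Finset.mem_singleton]
    have hiff : (x = 0 ∨ x = ((j+4:ℕ) : α j)) ↔ (x.val = 0 ∨ x.val = j+4) := by
      rw [Fin.ext_iff, Fin.ext_iff, v0, Fin.val_cast_of_lt (by omega)]
    exact not_congr ((s1_fix j x).trans hiff.symm)
  rw [hs, Finset.card_compl, Fintype.card_fin]
  have h2 : ({0, ((j+4:ℕ) : α j)} : Finset (α j)).card = 2 := by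
    rw [Finset.card_insert_of_notMem, Finset.card_singleton]
    simp only [Finset.mem_singleton]
    intro hh
    have := congrArg Fin.val hh
    rw [v0, Fin.val_cast_of_lt (by omega)] at this
    omega
  rw [h2]
  omega

private lemma s2_card : (s2 j).support.card = 2*j+6 := by
  have hs : (s2 j).support = ({1, ((j+5:ℕ) : α j)} : Finset (α j))ᶜ := by
    ext x
    simp only [Equiv.Perm.mem_support, Finset.mem_compl, Finset.mem_insert, Finset.mem_singleton]
    have hiff : (x = 1 ∨ x = ((j+5:ℕ) : α j)) ↔ (x.val = 1 ∨ x.val = j+5) := by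
      rw [Fin.ext_iff, Fin.ext_iff, v1, Fin.val_cast_of_lt (by omega)]
    exact not_congr ((s2_fix j x).trans hiff.symm)
  rw [hs, Finset.card_compl, Fintype.card_fin]
  have h2 : ({1, ((j+5:ℕ) : α j)} : Finset (α j)).card = 2 := by
    rw [Finset.card_insert_of_notMem, Finset.card_singleton]
    simp only [Finset.mem_singleton]
    intro hh
    have := congrArg Fin.val hh
    rw [v1, Fin.val_cast_of_lt (by omega)] at this
    omega
  rw [h2]
  omega

private lemma s1_ct : (s1 j).cycleType = Multiset.replicate (j+3) 2 := by
  rw [cycleType_of_sq (s1_sq j), s1_card]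
  congr 1
  omega

private lemma s2_ct : (s2 j).cycleType = Multiset.replicate (j+3) 2 := by
  rw [cycleType_of_sq (s2_sq j), s2_card]
  congr 1
  omega

private lemma rho_sq : rho j * rho j = 1 := by
  ext x
  simpa [Perm.mul_apply, rho_apply] using congrArg Fin.val (hfrho j x)

private lemma rho_fix (x : α j) : rho j x = x ↔ x.val < 6 := by
  have hx := x.isLt
  rw [rho_apply]
  unfold frho
  by_cases h : x.val < 6
  · simp [h]
  · rw [if_neg h]
    simp only [h, iff_false]
    intro heq
    have := congrArg Fin.val heq
    rw [val_5sub j x (by omega)] at this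
    omega

private lemma mem6 (x : α j) : x ∈ ({0,1,2,3,4,5} : Finset (α j)) ↔ x.val < 6 := by
  simp only [Finset.mem_insert, Finset.mem_singleton]
  constructor
  · rintro (rfl|rfl|rfl|rfl|rfl|rfl) <;>
      simp only [v0, v1, v2, v3, v4, v5] <;> omega
  · intro h
    have : x.val = 0 ∨ x.val = 1 ∨ x.val = 2 ∨ x.val = 3 ∨ x.val = 4 ∨ x.val = 5 := by omega
    rcases this with h|h|h|h|h|h
    · exact Or.inl (Fin.ext (by rw [h, v0]))
    · exact Or.inr (Or.inl (Fin.ext (by rw [h, v1])))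
    · exact Or.inr (Or.inr (Or.inl (Fin.ext (by rw [h, v2]))))
    · exact Or.inr (Or.inr (Or.inr (Or.inl (Fin.ext (by rw [h, v3])))))
    · exact Or.inr (Or.inr (Or.inr (Or.inr (Or.inl (Fin.ext (by rw [h, v4]))))))
    · exact Or.inr (Or.inr (Or.inr (Or.inr (Or.inr (Fin.ext (by rw [h, v5]))))))

private lemma card6 : ({0,1,2,3,4,5} : Finset (α j)).card = 6 := by
  rw [Finset.card_insert_of_notMem (by
        simp only [Finset.mem_insert, Finset.mem_singleton, Fin.ext_iff, v0, v1, v2, v3, v4, v5, not_or]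
        omega),
      Finset.card_insert_of_notMem (by
        simp only [Finset.mem_insert, Finset.mem_singleton, Fin.ext_iff, v1, v2, v3, v4, v5, not_or]
        omega),
      Finset.card_insert_of_notMem (by
        simp only [Finset.mem_insert, Finset.mem_singleton, Fin.ext_iff, v2, v3, v4, v5, not_or]
        omega),
      Finset.card_insert_of_notMem (by
        simp only [Finset.mem_insert, Finset.mem_singleton, Fin.ext_iff, v3, v4, v5, not_or]
        omega),
      Finset.card_insert_of_notMem (by
        simp only [Finset.mem_singleton, Fin.ext_iff, v4, v5]
        omega),
      Finset.card_singleton]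

private lemma rho_card : (rho j).support.card = 2*j+2 := by
  have hs : (rho j).support = ({0,1,2,3,4,5} : Finset (α j))ᶜ := by
    ext x
    simp only [Equiv.Perm.mem_support, Finset.mem_compl]
    exact not_congr ((rho_fix j x).trans (mem6 j x).symm)
  rw [hs, Finset.card_compl, Fintype.card_fin, card6]
  omega

private lemma rho_ct : (rho j).cycleType = Multiset.replicate (j+1) 2 := by
  rw [cycleType_of_sq (rho_sq j), rho_card]
  congr 1
  omega

private lemma C_cycleType : (C j).cycleType = {4} := by
  have hc : (C j).IsCycle := List.isCycle_formPerm (nodupC j) (by norm_num)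
  have hs : (C j).support = ([0,4,1,5] : List (α j)).toFinset :=
    List.support_formPerm_of_nodup _ (nodupC j) (by intro x h; simp at h)
  rw [hc.cycleType, hs, List.toFinset_card_of_nodup (nodupC j)]
  rfl

private lemma disjCrho : (C j).Disjoint (rho j) := by
  intro x
  by_cases h : x.val < 6
  · exact Or.inr ((rho_fix j x).mpr h)
  · refine Or.inl (C_apply_of j x ?_)
    simp only [Set.mem_insert_iff, Set.mem_singleton_iff, not_or]
    omega

private lemma s3_ct : (s3 j).cycleType = 4 ::ₘ Multiset.replicate (j+1) 2 := by
  rw [s3, (disjCrho j).cycleType_mul, C_cycleType, rho_ct, ← Multiset.singleton_add]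

private lemma s4_sq : s4 j * s4 j = 1 := by
  ext x
  simpa [Perm.mul_apply, s4_apply] using congrArg Fin.val (hf4 j x)

private lemma s4_support : (s4 j).support = Finset.univ := by
  ext x
  simp only [Equiv.Perm.mem_support, Finset.mem_univ, iff_true]
  have hx := x.isLt
  rw [s4_apply]
  unfold f4
  by_cases h2 : x.val < 2
  · rw [if_pos h2]
    intro hh
    have := congrArg Fin.val hh
    rw [val_add2 j x (by omega)] at this
    omega
  · by_cases h4 : x.val < 4
    · rw [if_neg h2, if_pos h4]
      intro hh
      have := congrArg Fin.val hh
      rw [val_sub2 j x (by omega)] at this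
      omega
    · rw [if_neg h2, if_neg h4]
      intro hh
      have := congrArg Fin.val hh
      rw [val_3sub j x (by omega)] at this
      omega

private lemma s4_ct : (s4 j).cycleType = Multiset.replicate (j+4) 2 := by
  rw [cycleType_of_sq (s4_sq j), s4_support, Finset.card_univ, Fintype.card_fin]
  congr 1
  omega

private lemma key : s3 j * s4 j = Equiv.addLeft (2 : α j) := by
  refine Equiv.ext fun x => ?_
  have hx := x.isLt
  rw [Perm.mul_apply, s4_apply, s3, Perm.mul_apply, Equiv.coe_addLeft]
  unfold f4
  by_cases h2 : x.val < 2
  · rw [if_pos h2]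
    have hv : (x + 2).val = x.val + 2 := val_add2 j x (by omega)
    rw [rho_apply]
    unfold frho
    rw [if_pos (by omega), C_apply_of j _ (by
      simp only [Set.mem_insert_iff, Set.mem_singleton_iff, not_or]
      omega)]
    ring
  · by_cases h4 : x.val < 4
    · rw [if_neg h2, if_pos h4]
      have hv : (x - 2).val = x.val - 2 := val_sub2 j x (by omega)
      rw [rho_apply]
      unfold frho
      rw [if_pos (by omega)]
      have hc := C_eval j
      have hx23 : x.val = 2 ∨ x.val = 3 := by omega
      rcases hx23 with h | h
      · obtain rfl : x = ((2:ℕ) : α j) := fe j h (by omega)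
        rw [show ((2:ℕ) : α j) - 2 = 0 from by push_cast; ring, hc.1]
        push_cast
        ring
      · obtain rfl : x = ((3:ℕ) : α j) := fe j h (by omega)
        rw [show ((3:ℕ) : α j) - 2 = 1 from by push_cast; ring, hc.2.2.1]
        push_cast
        ring
    · rw [if_neg h2, if_neg h4]
      have hv3 : ((3:α j) - x).val = 2*j+8+3 - x.val := val_3sub j x (by omega)
      by_cases hB : x.val ≤ 2*j+5
      · rw [rho_apply]
        unfold frho
        rw [if_neg (by omega)]
        have e : (5:α j) - ((3:α j) - x) = 2 + x := by ring
        rw [e, C_apply_of j _ (by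
          simp only [Set.mem_insert_iff, Set.mem_singleton_iff, not_or]
          rw [val_2add j x (by omega)]
          omega)]
      · have hx67 : x.val = 2*j+6 ∨ x.val = 2*j+7 := by omega
        rcases hx67 with h | h
        · have e5 : (3:α j) - x = 5 := Fin.ext (by rw [hv3, h, v5]; omega)
          rw [e5, rho_apply]
          unfold frho
          rw [if_pos (by rw [v5]; omega), (C_eval j).2.2.2]
          have hval : ((2:α j) + x).val = 0 := by
            rw [Fin.add_def, v2]
            exact modN j (Or.inr (by omega)) (by omega)
          exact (Fin.ext (by rw [hval]; exact (v0 j).symm)).symm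
        · have e4 : (3:α j) - x = 4 := Fin.ext (by rw [hv3, h, v4]; omega)
          rw [e4, rho_apply]
          unfold frho
          rw [if_pos (by rw [v4]; omega), (C_eval j).2.1]
          have hval : ((2:α j) + x).val = 1 := by
            rw [Fin.add_def, v2]
            exact modN j (Or.inr (by omega)) (by omega)
          exact (Fin.ext (by rw [hval]; exact (v1 j).symm)).symm

private lemma prod_one : s1 j * s2 j * s3 j * s4 j = 1 := by
  rw [mul_assoc (s1 j * s2 j), key]
  refine Equiv.ext fun x => ?_
  simp only [Perm.mul_apply, Equiv.coe_addLeft, s1_apply, s2_apply, Perm.coe_one, id_eq]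
  ring

private lemma pow_apply (k : ℕ) (x : α j) : ((s1 j * s2 j)^k) x = x - 2*(k : α j) := by
  induction k with
  | zero => simp
  | succ k ih =>
    have hstep : ∀ y : α j, (s1 j * s2 j) y = y - 2 := fun y => by
      rw [Perm.mul_apply, s1_apply, s2_apply]; ring
    rw [pow_succ', Perm.mul_apply, ih, hstep]
    push_cast
    ring

private lemma reach (b : α j) :
    ∃ g ∈ Subgroup.closure ({s1 j, s2 j, s3 j, s4 j} : Set (Perm (α j))), g 0 = b := by
  have hb := b.isLt
  have h1 : s1 j ∈ Subgroup.closure ({s1 j, s2 j, s3 j, s4 j} : Set (Perm (α j))) :=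
    Subgroup.subset_closure (by simp)
  have h2 : s2 j ∈ Subgroup.closure ({s1 j, s2 j, s3 j, s4 j} : Set (Perm (α j))) :=
    Subgroup.subset_closure (by simp)
  have h4 : s4 j ∈ Subgroup.closure ({s1 j, s2 j, s3 j, s4 j} : Set (Perm (α j))) :=
    Subgroup.subset_closure (by simp)
  have hp : ∀ k : ℕ, (s1 j * s2 j)^k ∈
      Subgroup.closure ({s1 j, s2 j, s3 j, s4 j} : Set (Perm (α j))) :=
    fun k => pow_mem (mul_mem h1 h2) k
  rcases Nat.even_or_odd b.val with he | ho
  · refine ⟨(s1 j * s2 j)^((2*j+8 - b.val)/2), hp _, ?_⟩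
    rw [pow_apply]
    have h2k : (2:α j) * ((((2*j+8 - b.val)/2 : ℕ)) : α j) = -b := by
      rw [show (2:α j) * ((((2*j+8 - b.val)/2 : ℕ)) : α j)
            = (((2*((2*j+8 - b.val)/2)) : ℕ) : α j) from by push_cast; ring,
        show 2*((2*j+8 - b.val)/2) = 2*j+8 - b.val from by
          rcases he with ⟨c, hc⟩; omega,
        Nat.cast_sub (le_of_lt hb), Fin.natCast_self, Fin.cast_val_eq_self, zero_sub]
    rw [h2k]
    ring
  · refine ⟨(s1 j * s2 j)^((2*j+7 - b.val)/2) * (s4 j * (s1 j * s2 j)^(j+2)),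
      mul_mem (hp _) (mul_mem h4 (hp _)), ?_⟩
    simp only [Perm.mul_apply, pow_apply, s4_apply]
    have e1 : (0:α j) - 2*(((j+2 : ℕ)) : α j) = 4 := by
      rw [show (2:α j) * (((j+2:ℕ)) : α j) = (((2*j+4 : ℕ)) : α j) from by push_cast; ring,
        show ((2*j+4 : ℕ) : α j) = ((2*j+8 : ℕ) : α j) - ((4:ℕ) : α j) from
          (congrArg (fun t : ℕ => (t : α j)) (by omega : 2*j+4 = 2*j+8 - 4)).trans
            (Nat.cast_sub (by omega)),
        Fin.natCast_self]
      push_cast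
      ring
    rw [e1]
    have e2 : f4 j 4 = -1 := by
      unfold f4
      rw [if_neg (by rw [v4]; omega), if_neg (by rw [v4]; omega)]
      ring
    rw [e2]
    have e3 : (2:α j) * ((((2*j+7 - b.val)/2 : ℕ)) : α j) = -1 - b := by
      rw [show (2:α j) * ((((2*j+7 - b.val)/2 : ℕ)) : α j)
            = (((2*((2*j+7 - b.val)/2)) : ℕ) : α j) from by push_cast; ring,
        show 2*((2*j+7 - b.val)/2) = 2*j+8 - (1 + b.val) from by
          rcases ho with ⟨c, hc⟩; omega,
        Nat.cast_sub (by omega), Fin.natCast_self, zero_sub]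
      push_cast [Fin.cast_val_eq_self]
      ring
    rw [e3]
    ring

end
end Stmt12Aux

/-- Type I degeneration 2 for even `n ≥ 8`:
cycle types `(2^((n-2)/2), 2^((n-2)/2), (4)(2)^((n-6)/2), 2^(n/2))`,
product one, generating a transitive subgroup of `Sₙ`. -/
theorem stmt_12 (n : ℕ) (hn : Even n) (hn8 : 8 ≤ n) :
    ∃ σ₁ σ₂ σ₃ σ₄ : Equiv.Perm (Fin n),
      σ₁.cycleType = Multiset.replicate ((n - 2) / 2) 2 ∧
      σ₂.cycleType = Multiset.replicate ((n - 2) / 2) 2 ∧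
      σ₃.cycleType = 4 ::ₘ Multiset.replicate ((n - 6) / 2) 2 ∧
      σ₄.cycleType = Multiset.replicate (n / 2) 2 ∧
      σ₁ * σ₂ * σ₃ * σ₄ = 1 ∧
      ∀ a b : Fin n,
        ∃ g ∈ Subgroup.closure ({σ₁, σ₂, σ₃, σ₄} : Set (Equiv.Perm (Fin n))), g a = b := by
  obtain ⟨j, rfl⟩ : ∃ j, n = 2*j+8 := ⟨(n-8)/2, by rcases hn with ⟨c, hc⟩; omega⟩
  refine ⟨Stmt12Aux.s1 j, Stmt12Aux.s2 j, Stmt12Aux.s3 j, Stmt12Aux.s4 j, ?_, ?_, ?_, ?_,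
    Stmt12Aux.prod_one j, ?_⟩
  · rw [Stmt12Aux.s1_ct]; congr 1; omega
  · rw [Stmt12Aux.s2_ct]; congr 1; omega
  · rw [Stmt12Aux.s3_ct]; congr 2; omega
  · rw [Stmt12Aux.s4_ct]; congr 1; omega
  · intro a b
    obtain ⟨ga, hga, hga0⟩ := Stmt12Aux.reach j a
    obtain ⟨gb, hgb, hgb0⟩ := Stmt12Aux.reach j b
    refine ⟨gb * ga⁻¹, mul_mem hgb (inv_mem hga), ?_⟩
    rw [Equiv.Perm.mul_apply, show ga⁻¹ a = 0 from by
      rw [← hga0]; exact Equiv.symm_apply_apply ga 0, hgb0]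
end
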